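/- arXiv:1906.06157 — 6 statements merged into one kernel-verified Lean document; each statement's English description precedes it below -/
import Mathlib

section
/- For every k > 1 and every n ≥ 1, the (k-1,n)-prefer-max sequence is a suffix of the (k,n)-prefer-max sequence. That is, if (w_i)_{i=0}^{k^n-1} is the sequence of windows of the (k,n)-prefer-max cycle and (v_i)_{i=0}^{(k-1)^n-1} is the sequence of windows of the (k-1,n)-prefer-max cycle, then for every i with 0 ≤ i < (k-1)^n one has w_{(k^n-(k-1)^n)+i} = v_i. -/
/-- `preferMaxAux k n i` is the list of windows `[wᵢ, wᵢ₋₁, ..., w₀]` of the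
`(k,n)`-prefer-max cycle, newest first.  The first window is `w₀ = 0^{n-1}(k-1)` and,
if `wᵢ = σx`, then `wᵢ₊₁ = xτ` where `τ` is the maximal symbol in `[k] = {0,…,k-1}`
such that `xτ` has not appeared among `w₀,…,wᵢ` (computed via `Nat.findGreatest`,
which returns `0` if no such symbol exists; the existence of such a symbol at each
step is part of the correctness of the construction). -/
def preferMaxAux (k n : ℕ) : ℕ → List (List ℕ)
  | 0 => [List.replicate (n - 1) 0 ++ [k - 1]]
  | i + 1 =>
    let prev := preferMaxAux k n i
    let w := prev.headI
    (w.tail ++ [Nat.findGreatest (fun τ => (w.tail ++ [τ]) ∉ prev) (k - 1)]) :: prev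

/-- `preferMax k n i` is the `i`-th window `wᵢ` of the `(k,n)`-prefer-max cycle. -/
def preferMax (k n i : ℕ) : List ℕ := (preferMaxAux k n i).headI

namespace Onion

open List

/-! ### Generic list pigeonhole helpers -/

lemma eq_headI_cons {u : List ℕ} (h : u ≠ []) : u = u.headI :: u.tail := by
  cases u with
  | nil => exact absurd rfl h
  | cons a l => rfl

lemma headI_mem {u : List ℕ} (h : u ≠ []) : u.headI ∈ u := by
  cases u with
  | nil => exact absurd rfl h
  | cons a l => exact mem_cons_self

lemma eq_concat {u : List ℕ} (h : u ≠ []) : u = u.dropLast ++ [u.getLast?.getD 0] := by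
  conv_lhs => rw [← dropLast_append_getLast h]
  congr 1
  rw [getLast?_eq_getLast h]
  rfl

lemma getD_getLast?_mem {u : List ℕ} (h : u ≠ []) : u.getLast?.getD 0 ∈ u := by
  rw [getLast?_eq_getLast h]
  exact getLast_mem h

lemma countP_ge {α : Type*} (l : List α) (p : α → Bool) (f : ℕ → α) (K : ℕ)
    (hmem : ∀ σ < K, f σ ∈ l ∧ p (f σ) = true)
    (hinj : ∀ σ < K, ∀ τ < K, f σ = f τ → σ = τ) :
    K ≤ l.countP p := by
  have h1 : ((range K).map f).Nodup := by
    refine (nodup_range : (range K).Nodup).map_on ?_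
    intro x hx y hy h
    exact hinj x (mem_range.1 hx) y (mem_range.1 hy) h
  have h2 : (range K).map f ⊆ l.filter p := by
    intro a ha
    obtain ⟨σ, hσ, rfl⟩ := mem_map.1 ha
    have := hmem σ (mem_range.1 hσ)
    exact mem_filter.2 ⟨this.1, this.2⟩
  have := (h1.subperm h2).length_le
  simpa [countP_eq_length_filter] using this

lemma countP_le {α : Type*} (l : List α) (p : α → Bool) (g : α → ℕ) (f : ℕ → α)
    (K : ℕ) (nd : l.Nodup)
    (hg : ∀ u ∈ l, p u = true → g u < K)
    (hrec : ∀ u ∈ l, p u = true → u = f (g u)) :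
    l.countP p ≤ K := by
  have hfil : ∀ u ∈ l.filter p, u ∈ l ∧ p u = true := fun u hu => mem_filter.1 hu
  have h1 : ((l.filter p).map g).Nodup := by
    refine (nd.filter p).map_on ?_
    intro x hx y hy h
    obtain ⟨hx1, hx2⟩ := hfil x hx
    obtain ⟨hy1, hy2⟩ := hfil y hy
    rw [hrec x hx1 hx2, hrec y hy1 hy2, h]
  have h2 : (l.filter p).map g ⊆ range K := by
    intro a ha
    obtain ⟨u, hu, rfl⟩ := mem_map.1 ha
    obtain ⟨hu1, hu2⟩ := hfil u hu
    exact mem_range.2 (hg u hu1 hu2)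
  have := (h1.subperm h2).length_le
  simpa [countP_eq_length_filter] using this

lemma mem_of_countP_ge {α : Type*} (l : List α) (p : α → Bool) (g : α → ℕ)
    (f : ℕ → α) (K : ℕ) (nd : l.Nodup)
    (hg : ∀ u ∈ l, p u = true → g u < K)
    (hrec : ∀ u ∈ l, p u = true → u = f (g u))
    (hge : K ≤ l.countP p) :
    ∀ σ < K, f σ ∈ l := by
  have hfil : ∀ u ∈ l.filter p, u ∈ l ∧ p u = true := fun u hu => mem_filter.1 hu
  have h1 : ((l.filter p).map g).Nodup := by
    refine (nd.filter p).map_on ?_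
    intro x hx y hy h
    obtain ⟨hx1, hx2⟩ := hfil x hx
    obtain ⟨hy1, hy2⟩ := hfil y hy
    rw [hrec x hx1 hx2, hrec y hy1 hy2, h]
  have h2 : (l.filter p).map g ⊆ range K := by
    intro a ha
    obtain ⟨u, hu, rfl⟩ := mem_map.1 ha
    obtain ⟨hu1, hu2⟩ := hfil u hu
    exact mem_range.2 (hg u hu1 hu2)
  have hperm : (l.filter p).map g ~ range K := by
    refine (h1.subperm h2).perm_of_length_le ?_
    simpa [countP_eq_length_filter] using hge
  intro σ hσ
  have : σ ∈ (l.filter p).map g := hperm.mem_iff.2 (mem_range.2 hσ)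
  obtain ⟨u, hu, hgu⟩ := mem_map.1 this
  obtain ⟨hu1, hu2⟩ := hfil u hu
  have := hrec u hu1 hu2
  rw [hgu] at this
  rwa [← this]

/-! ### Basic properties of `preferMaxAux` -/

lemma aux_succ (k n t : ℕ) :
    preferMaxAux k n (t+1) =
      ((preferMax k n t).tail ++
        [Nat.findGreatest (fun τ => ((preferMax k n t).tail ++ [τ]) ∉ preferMaxAux k n t)
          (k - 1)]) :: preferMaxAux k n t := rfl

lemma pm_succ (k n t : ℕ) :
    preferMax k n (t+1) =
      (preferMax k n t).tail ++
        [Nat.findGreatest (fun τ => ((preferMax k n t).tail ++ [τ]) ∉ preferMaxAux k n t)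
          (k - 1)] := rfl

lemma pm_zero (k n : ℕ) : preferMax k n 0 = List.replicate (n-1) 0 ++ [k-1] := rfl

lemma length_aux (k n : ℕ) : ∀ t, (preferMaxAux k n t).length = t + 1
  | 0 => rfl
  | t+1 => by rw [aux_succ, length_cons, length_aux k n t]

lemma mem_aux_of_le {k n s t : ℕ} (h : s ≤ t) : preferMax k n s ∈ preferMaxAux k n t := by
  induction t with
  | zero => interval_cases s; exact mem_singleton_self _
  | succ t ih =>
    rcases Nat.eq_or_lt_of_le h with rfl | h'
    · rw [aux_succ]; exact mem_cons_self
    · rw [aux_succ]; exact mem_cons_of_mem _ (ih (by omega))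

lemma aux_subset {k n s t : ℕ} (h : s ≤ t) : preferMaxAux k n s ⊆ preferMaxAux k n t := by
  induction t with
  | zero => interval_cases s; exact fun a ha => ha
  | succ t ih =>
    rcases Nat.eq_or_lt_of_le h with rfl | h'
    · exact fun a ha => ha
    · rw [aux_succ]; exact fun a ha => mem_cons_of_mem _ (ih (by omega) ha)

lemma exists_index {k n t : ℕ} {u : List ℕ} (h : u ∈ preferMaxAux k n t) :
    ∃ s ≤ t, u = preferMax k n s := by
  induction t with
  | zero => exact ⟨0, le_refl _, by simpa [preferMax, preferMaxAux] using (mem_singleton.1 h)⟩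
  | succ t ih =>
    rw [aux_succ, mem_cons] at h
    rcases h with h | h
    · exact ⟨t+1, le_refl _, h⟩
    · obtain ⟨s, hs, hu⟩ := ih h
      exact ⟨s, by omega, hu⟩

lemma shape {k n : ℕ} (hk : 0 < k) (hn : 0 < n) :
    ∀ t, ∀ u ∈ preferMaxAux k n t, u.length = n ∧ ∀ c ∈ u, c < k := by
  intro t
  induction t with
  | zero =>
    intro u hu
    rw [mem_singleton.1 hu]
    constructor
    · simp; omega
    · intro c hc
      rcases mem_append.1 hc with h | h
      · rw [eq_of_mem_replicate h]; omega
      · rw [mem_singleton.1 h]; omega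
  | succ t ih =>
    intro u hu
    rw [aux_succ, mem_cons] at hu
    rcases hu with rfl | hu
    · obtain ⟨hl, hc⟩ := ih _ (mem_aux_of_le (le_refl t))
      constructor
      · rw [length_append, length_tail, hl]; simp; omega
      · intro c hc'
        rcases mem_append.1 hc' with h | h
        · exact hc _ (mem_of_mem_tail h)
        · rw [mem_singleton.1 h]
          have := Nat.findGreatest_le (P := fun τ =>
            ((preferMax k n t).tail ++ [τ]) ∉ preferMaxAux k n t) (k-1)
          omega
    · exact ih _ hu

lemma length_pm {k n : ℕ} (hk : 0 < k) (hn : 0 < n) (t : ℕ) :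
    (preferMax k n t).length = n :=
  (shape hk hn t _ (mem_aux_of_le (le_refl t))).1

lemma pm_ne_nil {k n : ℕ} (hk : 0 < k) (hn : 0 < n) (t : ℕ) :
    preferMax k n t ≠ [] := by
  have := length_pm hk hn t
  intro h; rw [h] at this; simp at this; omega

/-! ### Entry/exit counting -/

/-- Number of windows among `w₀,…,w_t` that *enter* the state `z`
(i.e. whose last `n-1` symbols are `z`). -/
def entC (k n t : ℕ) (z : List ℕ) : ℕ :=
  (preferMaxAux k n t).countP (fun u => decide (u.tail = z))

/-- Number of windows among `w₀,…,w_t` that *exit* the state `z`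
(i.e. whose first `n-1` symbols are `z`). -/
def exiC (k n t : ℕ) (z : List ℕ) : ℕ :=
  (preferMaxAux k n t).countP (fun u => decide (u.dropLast = z))

lemma flow (k n : ℕ) (z : List ℕ) : ∀ t,
    exiC k n t z + (if (preferMax k n t).tail = z then 1 else 0)
      = entC k n t z + (if List.replicate (n-1) 0 = z then 1 else 0) := by
  intro t
  induction t with
  | zero =>
    have h1 : (preferMax k n 0).dropLast = List.replicate (n-1) 0 := by
      rw [pm_zero]; exact dropLast_concat ..
    simp only [entC, exiC, preferMaxAux, countP_cons, countP_nil]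
    rcases eq_or_ne ((preferMax k n 0).tail) z with h | h <;>
      rcases eq_or_ne (List.replicate (n-1) 0) z with h' | h'
    · rw [if_pos h, if_pos h']
      have : decide ((List.replicate (n - 1) 0 ++ [k - 1]).tail = z) = true := by
        rw [decide_eq_true_iff]; exact h
      rw [this]
      have : decide ((List.replicate (n - 1) 0 ++ [k - 1]).dropLast = z) = true := by
        rw [decide_eq_true_iff, dropLast_concat]; exact h'
      rw [this]
    · rw [if_pos h, if_neg h']
      have e1 : decide ((List.replicate (n - 1) 0 ++ [k - 1]).tail = z) = true := by
        rw [decide_eq_true_iff]; exact h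
      have e2 : decide ((List.replicate (n - 1) 0 ++ [k - 1]).dropLast = z) = false := by
        rw [decide_eq_false_iff_not, dropLast_concat]; exact h'
      rw [e1, e2]; simp
    · rw [if_neg h, if_pos h']
      have e1 : decide ((List.replicate (n - 1) 0 ++ [k - 1]).tail = z) = false := by
        rw [decide_eq_false_iff_not]; exact h
      have e2 : decide ((List.replicate (n - 1) 0 ++ [k - 1]).dropLast = z) = true := by
        rw [decide_eq_true_iff, dropLast_concat]; exact h'
      rw [e1, e2]; simp
    · rw [if_neg h, if_neg h']
      have e1 : decide ((List.replicate (n - 1) 0 ++ [k - 1]).tail = z) = false := by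
        rw [decide_eq_false_iff_not]; exact h
      have e2 : decide ((List.replicate (n - 1) 0 ++ [k - 1]).dropLast = z) = false := by
        rw [decide_eq_false_iff_not, dropLast_concat]; exact h'
      rw [e1, e2]
  | succ t ih =>
    have hd : (preferMax k n (t+1)).dropLast = (preferMax k n t).tail := by
      rw [pm_succ]; exact dropLast_concat ..
    have he : entC k n (t+1) z
        = entC k n t z + (if (preferMax k n (t+1)).tail = z then 1 else 0) := by
      simp only [entC, aux_succ, countP_cons]
      rcases eq_or_ne ((preferMax k n (t+1)).tail) z with h | h
      · rw [if_pos h]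
        have : decide ((preferMax k n (t+1)).tail = z) = true := by
          rw [decide_eq_true_iff]; exact h
        rw [show (((preferMax k n t).tail ++ [Nat.findGreatest (fun τ =>
            ((preferMax k n t).tail ++ [τ]) ∉ preferMaxAux k n t) (k-1)]).tail)
            = (preferMax k n (t+1)).tail from rfl, this]; simp
      · rw [if_neg h]
        have : decide ((preferMax k n (t+1)).tail = z) = false := by
          rw [decide_eq_false_iff_not]; exact h
        rw [show (((preferMax k n t).tail ++ [Nat.findGreatest (fun τ =>
            ((preferMax k n t).tail ++ [τ]) ∉ preferMaxAux k n t) (k-1)]).tail)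
            = (preferMax k n (t+1)).tail from rfl, this]; simp
    have hx : exiC k n (t+1) z
        = exiC k n t z + (if (preferMax k n t).tail = z then 1 else 0) := by
      simp only [exiC, aux_succ, countP_cons]
      rcases eq_or_ne ((preferMax k n t).tail) z with h | h
      · rw [if_pos h]
        have : decide ((((preferMax k n t).tail ++ [Nat.findGreatest (fun τ =>
            ((preferMax k n t).tail ++ [τ]) ∉ preferMaxAux k n t) (k-1)])).dropLast = z)
            = true := by
          rw [decide_eq_true_iff, dropLast_concat]; exact h
        rw [this]; simp
      · rw [if_neg h]
        have : decide ((((preferMax k n t).tail ++ [Nat.findGreatest (fun τ =>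
            ((preferMax k n t).tail ++ [τ]) ∉ preferMaxAux k n t) (k-1)])).dropLast = z)
            = false := by
          rw [decide_eq_false_iff_not, dropLast_concat]; exact h
        rw [this]; simp
    rw [he, hx]
    omega

/-! ### Specialized counting lemmas -/

section Counting

variable {k n t : ℕ} {z : List ℕ}

lemma ent_le (hk : 0 < k) (hn : 0 < n) (nd : (preferMaxAux k n t).Nodup) :
    entC k n t z ≤ k := by
  refine countP_le _ _ (fun u => u.headI) (fun σ => σ :: z) k nd ?_ ?_
  · intro u hu _
    obtain ⟨hl, hc⟩ := shape hk hn t u hu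
    exact hc _ (headI_mem (by intro h; rw [h] at hl; simp at hl; omega))
  · intro u hu hp
    rw [decide_eq_true_iff] at hp
    obtain ⟨hl, _⟩ := shape hk hn t u hu
    have : u ≠ [] := by intro h; rw [h] at hl; simp at hl; omega
    conv_lhs => rw [eq_headI_cons this]
    rw [hp]

lemma mem_cons_of_ent_ge (hk : 0 < k) (hn : 0 < n) (nd : (preferMaxAux k n t).Nodup)
    (hge : k ≤ entC k n t z) : ∀ σ < k, σ :: z ∈ preferMaxAux k n t := by
  refine mem_of_countP_ge _ _ (fun u => u.headI) (fun σ => σ :: z) k nd ?_ ?_ hge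
  · intro u hu _
    obtain ⟨hl, hc⟩ := shape hk hn t u hu
    exact hc _ (headI_mem (by intro h; rw [h] at hl; simp at hl; omega))
  · intro u hu hp
    rw [decide_eq_true_iff] at hp
    obtain ⟨hl, _⟩ := shape hk hn t u hu
    have : u ≠ [] := by intro h; rw [h] at hl; simp at hl; omega
    conv_lhs => rw [eq_headI_cons this]
    rw [hp]

lemma ent_ge (hmem : ∀ σ < k, σ :: z ∈ preferMaxAux k n t) : k ≤ entC k n t z := by
  refine countP_ge _ _ (fun σ => σ :: z) k ?_ ?_
  · intro σ hσ
    exact ⟨hmem σ hσ, by simp⟩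
  · intro σ _ τ _ h
    injection h

lemma exi_le (hk : 0 < k) (hn : 0 < n) (nd : (preferMaxAux k n t).Nodup) :
    exiC k n t z ≤ k := by
  refine countP_le _ _ (fun u => u.getLast?.getD 0) (fun τ => z ++ [τ]) k nd ?_ ?_
  · intro u hu _
    obtain ⟨hl, hc⟩ := shape hk hn t u hu
    exact hc _ (getD_getLast?_mem (by intro h; rw [h] at hl; simp at hl; omega))
  · intro u hu hp
    rw [decide_eq_true_iff] at hp
    obtain ⟨hl, _⟩ := shape hk hn t u hu
    have : u ≠ [] := by intro h; rw [h] at hl; simp at hl; omega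
    conv_lhs => rw [eq_concat this]
    rw [hp]

lemma mem_concat_of_exi_ge (hk : 0 < k) (hn : 0 < n) (nd : (preferMaxAux k n t).Nodup)
    (hge : k ≤ exiC k n t z) : ∀ τ < k, z ++ [τ] ∈ preferMaxAux k n t := by
  refine mem_of_countP_ge _ _ (fun u => u.getLast?.getD 0) (fun τ => z ++ [τ]) k nd ?_ ?_ hge
  · intro u hu _
    obtain ⟨hl, hc⟩ := shape hk hn t u hu
    exact hc _ (getD_getLast?_mem (by intro h; rw [h] at hl; simp at hl; omega))
  · intro u hu hp
    rw [decide_eq_true_iff] at hp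
    obtain ⟨hl, _⟩ := shape hk hn t u hu
    have : u ≠ [] := by intro h; rw [h] at hl; simp at hl; omega
    conv_lhs => rw [eq_concat this]
    rw [hp]

lemma exi_ge (hmem : ∀ τ < k, z ++ [τ] ∈ preferMaxAux k n t) : k ≤ exiC k n t z := by
  refine countP_ge _ _ (fun τ => z ++ [τ]) k ?_ ?_
  · intro τ hτ
    refine ⟨hmem τ hτ, ?_⟩
    rw [decide_eq_true_iff, dropLast_concat]
  · intro σ _ τ _ h
    have := List.append_inj_right h rfl
    injection this

end Counting

/-! ### The greedy rule uses extensions in decreasing order -/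

lemma mono_mem {k n : ℕ} (hk : 0 < k) (hn : 0 < n) :
    ∀ t {z τ τ'}, z.length = n - 1 → z ++ [τ] ∈ preferMaxAux k n t → τ ≤ τ' → τ' < k →
      z ++ [τ'] ∈ preferMaxAux k n t := by
  intro t
  induction t with
  | zero =>
    intro z τ τ' hzl hmem hle hlt
    have h := mem_singleton.1 hmem
    have h1 : z = List.replicate (n-1) 0 ∧ τ = k - 1 := by
      have := List.append_inj h (by simp [hzl])
      exact ⟨this.1, by injection this.2⟩
    have : τ' = k - 1 := by omega
    rw [h1.1, this]
    exact mem_singleton_self _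
  | succ t ih =>
    intro z τ τ' hzl hmem hle hlt
    rw [aux_succ, mem_cons] at hmem
    rcases hmem with h | h
    · have hwl : (preferMax k n t).tail.length = n - 1 := by
        rw [length_tail, length_pm hk hn]
      have := List.append_inj h (by rw [hzl, hwl])
      obtain ⟨hz, hτ⟩ := this
      have hτ' : τ = Nat.findGreatest
          (fun τ => ((preferMax k n t).tail ++ [τ]) ∉ preferMaxAux k n t) (k-1) := by
        injection hτ
      rcases Nat.eq_or_lt_of_le hle with rfl | hlt'
      · rw [aux_succ, h]
        exact mem_cons_self
      · have hnP := Nat.findGreatest_is_greatest (by omega : Nat.findGreatest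
          (fun τ => ((preferMax k n t).tail ++ [τ]) ∉ preferMaxAux k n t) (k-1) < τ')
          (by omega : τ' ≤ k - 1)
        simp only [not_not] at hnP
        rw [aux_succ]
        exact mem_cons_of_mem _ (by rw [hz]; exact hnP)
    · rw [aux_succ]
      exact mem_cons_of_mem _ (ih hzl h hle hlt)

/-! ### If the state returns to `0^{n-1}` with all its extensions used, all windows occurred -/

lemma all_of_start {k n : ℕ} (hk : 0 < k) (hn : 0 < n) (t : ℕ)
    (nd : (preferMaxAux k n t).Nodup)
    (hst : (preferMax k n t).tail = List.replicate (n-1) 0)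
    (hall : ∀ τ < k, List.replicate (n-1) 0 ++ [τ] ∈ preferMaxAux k n t) :
    ∀ u : List ℕ, u.length = n → (∀ c ∈ u, c < k) → u ∈ preferMaxAux k n t := by
  have hbal : ∀ z, exiC k n t z = entC k n t z := by
    intro z
    have h := flow k n z t
    rw [hst] at h
    omega
  suffices S : ∀ m, ∀ u : List ℕ, u.length = n → (∀ c ∈ u, c < k) →
      u.drop m = List.replicate (n-m) 0 → u ∈ preferMaxAux k n t by
    intro u hl hc
    refine S n u hl hc ?_
    rw [← hl, drop_length, Nat.sub_self]
    rfl
  intro m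
  induction m with
  | zero =>
    intro u hl hc hdrop
    rw [drop_zero] at hdrop
    have : List.replicate n 0 = List.replicate (n-1) 0 ++ [0] := by
      rw [← replicate_succ']
      congr 1
      omega
    rw [hdrop, Nat.sub_zero, this]
    exact hall 0 hk
  | succ m ih =>
    intro u hl hc hdrop
    by_cases hm : n ≤ m
    · refine ih u hl hc ?_
      rw [drop_eq_nil_of_le (by omega), show n - m = 0 by omega]
      rfl
    · push_neg at hm
      have hune : u ≠ [] := by intro h; rw [h] at hl; simp at hl; omega
      set z := u.tail with hz
      have hzl : z.length = n - 1 := by rw [hz, length_tail, hl]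
      have hz0 : z ++ [0] ∈ preferMaxAux k n t := by
        refine ih (z ++ [0]) (by rw [length_append, hzl]; simp; omega) ?_ ?_
        · intro c hc'
          rcases mem_append.1 hc' with h | h
          · exact hc _ (mem_of_mem_tail h)
          · rw [mem_singleton.1 h]; omega
        · rw [drop_append_of_le_length (by omega)]
          have h2 : z.drop m = u.drop (m+1) := by
            rw [hz, ← drop_one, drop_drop, Nat.add_comm]
          rw [h2, hdrop, ← replicate_succ']
          congr 1
          omega
      have hzall : ∀ τ < k, z ++ [τ] ∈ preferMaxAux k n t :=
        fun τ hτ => mono_mem hk hn t hzl hz0 (Nat.zero_le τ) hτ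
      have hent : k ≤ entC k n t z := by
        rw [← hbal]
        exact exi_ge hzall
      have hm2 := mem_cons_of_ent_ge hk hn nd hent
      have hu2 : u = u.headI :: z := by rw [hz]; exact eq_headI_cons hune
      rw [hu2]
      exact hm2 u.headI (hc _ (headI_mem hune))

/-! ### The list of all words of length `n` over `[k]` -/

def allTup (k : ℕ) : ℕ → List (List ℕ)
  | 0 => [[]]
  | n+1 => (allTup k n).flatMap fun l => (List.range k).map (· :: l)

lemma mem_allTup {k : ℕ} : ∀ {n : ℕ} {u : List ℕ},
    u ∈ allTup k n ↔ u.length = n ∧ ∀ c ∈ u, c < k := by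
  intro n
  induction n with
  | zero =>
    intro u
    constructor
    · intro h
      rw [mem_singleton.1 h]
      exact ⟨rfl, by simp⟩
    · intro ⟨h1, _⟩
      rw [length_eq_zero_iff.1 h1]
      exact mem_singleton_self _
  | succ n ih =>
    intro u
    constructor
    · intro h
      obtain ⟨l, hl, hu⟩ := mem_flatMap.1 h
      obtain ⟨c, hc, rfl⟩ := mem_map.1 hu
      obtain ⟨h1, h2⟩ := ih.1 hl
      refine ⟨by simp [h1], ?_⟩
      intro d hd
      rcases mem_cons.1 hd with rfl | hd
      · exact mem_range.1 hc
      · exact h2 _ hd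
    · intro ⟨h1, h2⟩
      cases u with
      | nil => simp at h1
      | cons c l =>
        refine mem_flatMap.2 ⟨l, ih.2 ⟨by simpa using h1, fun d hd => h2 _ (mem_cons_of_mem _ hd)⟩, ?_⟩
        exact mem_map.2 ⟨c, mem_range.2 (h2 _ (mem_cons_self)), rfl⟩

lemma length_flatMap_const {α β : Type*} (l : List α) (f : α → List β) (c : ℕ)
    (h : ∀ a ∈ l, (f a).length = c) : (l.flatMap f).length = l.length * c := by
  induction l with
  | nil => simp
  | cons a l ih =>
    rw [flatMap_cons, length_append, ih (fun a ha => h a (mem_cons_of_mem _ ha)),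
      h a (mem_cons_self), length_cons]
    ring

lemma length_allTup {k : ℕ} : ∀ n, (allTup k n).length = k ^ n
  | 0 => rfl
  | n+1 => by
    rw [show allTup k (n+1) = (allTup k n).flatMap fun l => (List.range k).map (· :: l) from rfl,
      length_flatMap_const _ _ k (fun a _ => by simp), length_allTup n, pow_succ]

lemma nodup_allTup {k : ℕ} : ∀ n, (allTup k n).Nodup
  | 0 => nodup_singleton _
  | n+1 => by
    rw [show allTup k (n+1) = (allTup k n).flatMap fun l => (List.range k).map (· :: l) from rfl]
    rw [nodup_flatMap]
    constructor
    · intro l _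
      exact (nodup_range : (range k).Nodup).map (fun a b h => by injection h)
    · have := nodup_allTup (k := k) n
      refine this.imp ?_
      intro a b hab
      intro x hxa hxb
      obtain ⟨c, _, rfl⟩ := mem_map.1 hxa
      obtain ⟨c', _, he⟩ := mem_map.1 hxb
      exact hab (by injection he with h1 h2; exact h2.symm)

lemma nodup_aux {k n : ℕ} (hk : 0 < k) (hn : 0 < n) :
    ∀ t, t < k ^ n → (preferMaxAux k n t).Nodup := by
  intro t
  induction t with
  | zero => intro _; exact nodup_singleton _
  | succ t ih =>
    intro ht
    have nd := ih (by omega)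
    rw [aux_succ, nodup_cons]
    refine ⟨?_, nd⟩
    intro hmem
    set x := (preferMax k n t).tail with hxdef
    have hstuck : ∀ τ' < k, x ++ [τ'] ∈ preferMaxAux k n t := by
      intro τ' hτ'
      by_contra hP
      exact Nat.findGreatest_spec (m := τ')
        (P := fun τ => x ++ [τ] ∉ preferMaxAux k n t) (by omega) hP hmem
    have hxl : x.length = n - 1 := by rw [hxdef, length_tail, length_pm hk hn]
    have hexi : k ≤ exiC k n t x := exi_ge hstuck
    have hentle : entC k n t x ≤ k := ent_le hk hn nd
    have hfl := flow k n x t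
    rw [if_pos hxdef.symm] at hfl
    have hst : List.replicate (n-1) 0 = x := by
      by_contra hne
      rw [if_neg hne] at hfl
      omega
    have hfull := all_of_start hk hn t nd (by rw [← hxdef, ← hst]) (by rw [hst]; exact hstuck)
    have hsub : allTup k n ⊆ preferMaxAux k n t := by
      intro u hu
      exact hfull u (mem_allTup.1 hu).1 (mem_allTup.1 hu).2
    have := ((nodup_allTup n).subperm hsub).length_le
    rw [length_allTup, length_aux] at this
    omega

lemma length_filter_contains {k n : ℕ} (hk : 1 < k) :
    ((allTup k n).filter (fun u => decide ((k-1) ∈ u))).length = k^n - (k-1)^n := by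
  have hsub1 : (allTup k n).filter (fun u => !decide ((k-1) ∈ u)) ⊆ allTup (k-1) n := by
    intro u hu
    obtain ⟨h1, h2⟩ := mem_filter.1 hu
    simp only [Bool.not_eq_true', decide_eq_false_iff_not] at h2
    obtain ⟨hl, hc⟩ := mem_allTup.1 h1
    refine mem_allTup.2 ⟨hl, fun c hc' => ?_⟩
    have := hc c hc'
    have : c ≠ k - 1 := fun h => h2 (h ▸ hc')
    omega
  have hsub2 : allTup (k-1) n ⊆ (allTup k n).filter (fun u => !decide ((k-1) ∈ u)) := by
    intro u hu
    obtain ⟨hl, hc⟩ := mem_allTup.1 hu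
    refine mem_filter.2 ⟨mem_allTup.2 ⟨hl, fun c hc' => by have := hc c hc'; omega⟩, ?_⟩
    simp only [Bool.not_eq_true', decide_eq_false_iff_not]
    intro hmem
    have := hc _ hmem
    omega
  have h1 := ((nodup_allTup (k := k-1) n).subperm hsub2).length_le
  have h2 := (((nodup_allTup (k := k) n).filter _).subperm hsub1).length_le
  have hlen : ((allTup k n).filter (fun u => !decide ((k-1) ∈ u))).length = (k-1)^n := by
    rw [length_allTup] at h1 h2
    omega
  have htot := List.length_eq_countP_add_countP (p := fun u => decide ((k-1) ∈ u)) (l := allTup k n)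
  rw [countP_eq_length_filter, countP_eq_length_filter, length_allTup] at htot
  simp only [decide_not, Bool.decide_eq_true] at htot
  have hle : (k-1)^n ≤ k^n := Nat.pow_le_pow_left (by omega) n
  omega

lemma fg_congr {P Q : ℕ → Prop} [DecidablePred P] [DecidablePred Q] :
    ∀ b, (∀ m ≤ b, (P m ↔ Q m)) → Nat.findGreatest P b = Nat.findGreatest Q b
  | 0, _ => rfl
  | b+1, h => by
    rw [Nat.findGreatest_succ, Nat.findGreatest_succ]
    by_cases hP : P (b+1)
    · rw [if_pos hP, if_pos ((h _ (le_refl _)).1 hP)]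
    · rw [if_neg hP, if_neg (fun hQ => hP ((h _ (le_refl _)).2 hQ)),
        fg_congr b (fun m hm => h m (le_trans hm (Nat.le_succ _)))]

lemma fg_drop_top {P : ℕ → Prop} [DecidablePred P] {b : ℕ} (hb : 0 < b) (hP : ¬ P b) :
    Nat.findGreatest P b = Nat.findGreatest P (b-1) := by
  have h1 : Nat.findGreatest P b ≤ b := Nat.findGreatest_le b
  have h2 : Nat.findGreatest P b ≠ b := by
    intro h
    exact hP (Nat.findGreatest_of_ne_zero h (by omega))
  have h3 : Nat.findGreatest P (b-1) ≤ Nat.findGreatest P b :=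
    Nat.findGreatest_mono_right P (by omega)
  have h4 : Nat.findGreatest P b ≤ Nat.findGreatest P (b-1) := by
    rcases Nat.eq_zero_or_pos (Nat.findGreatest P b) with h | h
    · omega
    · exact Nat.le_findGreatest (by omega)
        (Nat.findGreatest_of_ne_zero rfl (by omega))
  omega

lemma phase {k n : ℕ} (hk : 1 < k) (hn : 0 < n) :
    0 < k^n - (k-1)^n ∧
    preferMax k n (k^n - (k-1)^n) = List.replicate (n-1) 0 ++ [k-2] ∧
    (∀ s < k^n - (k-1)^n, (k-1) ∈ preferMax k n s) ∧
    (∀ z : List ℕ, z.length = n-1 → (∀ c ∈ z, c < k) →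
      z ++ [k-1] ∈ preferMaxAux k n (k^n - (k-1)^n - 1)) := by
  have hk0 : 0 < k := by omega
  have hM : (k-1)^n < k^n := Nat.pow_lt_pow_left (by omega) (by omega)
  have hNpos : 0 < k^n := by positivity
  -- all windows are present at time k^n - 1
  have hfull : ∀ u : List ℕ, u.length = n → (∀ c ∈ u, c < k) →
      u ∈ preferMaxAux k n (k^n - 1) := by
    have nd := nodup_aux hk0 hn (k^n - 1) (by omega)
    have hs : preferMaxAux k n (k^n - 1) ⊆ allTup k n := by
      intro u hu
      exact mem_allTup.2 (shape hk0 hn _ u hu)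
    have hperm := (nd.subperm hs).perm_of_length_le
      (by rw [length_allTup, length_aux]; omega)
    intro u hl hc
    exact hperm.symm.subset (mem_allTup.2 ⟨hl, hc⟩)
  -- some window avoids the symbol k-1
  have hEx : ∃ s, (k-1) ∉ preferMax k n s := by
    obtain ⟨s, _, hs⟩ := exists_index (hfull (List.replicate n 0) (by simp) (by
      intro c hc; rw [eq_of_mem_replicate hc]; omega))
    refine ⟨s, ?_⟩
    rw [← hs]
    intro h
    have := eq_of_mem_replicate h
    omega
  set t₁ := Nat.find hEx with ht₁def
  have hQt₁ : (k-1) ∉ preferMax k n t₁ := Nat.find_spec hEx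
  have hmin : ∀ s < t₁, (k-1) ∈ preferMax k n s := fun s h => not_not.1 (Nat.find_min hEx h)
  have ht₁ub : t₁ ≤ k^n - 1 := by
    obtain ⟨s₂, hs₂le, hs₂⟩ := exists_index (hfull (List.replicate n 0) (by simp) (by
      intro c hc; rw [eq_of_mem_replicate hc]; omega))
    have hz2 : (k-1) ∉ preferMax k n s₂ := by
      rw [← hs₂]
      intro h
      have := eq_of_mem_replicate h
      omega
    exact le_trans (Nat.find_min' hEx hz2) hs₂le
  have ht₁pos : 0 < t₁ := by
    rcases Nat.eq_zero_or_pos t₁ with h | h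
    · exfalso
      apply hQt₁
      rw [h, pm_zero]
      exact mem_append.2 (Or.inr (mem_singleton_self _))
    · exact h
  obtain ⟨tb, htb⟩ : ∃ tb, t₁ = tb + 1 := ⟨t₁ - 1, by omega⟩
  have htblt : tb < k^n := by omega
  have ndtb := nodup_aux hk0 hn tb htblt
  set x := (preferMax k n tb).tail with hxdef
  have hxl : x.length = n - 1 := by rw [hxdef, length_tail, length_pm hk0 hn]
  have hwt₁ : preferMax k n t₁ = x ++ [Nat.findGreatest
      (fun τ => (x ++ [τ]) ∉ preferMaxAux k n tb) (k-1)] := by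
    rw [htb, pm_succ, hxdef]
  have hk1x : (k-1) ∉ x := by
    intro h
    exact hQt₁ (hwt₁ ▸ mem_append.2 (Or.inl h))
  have hτne : Nat.findGreatest (fun τ => (x ++ [τ]) ∉ preferMaxAux k n tb) (k-1) ≠ k-1 := by
    intro h
    exact hQt₁ (hwt₁ ▸ mem_append.2 (Or.inr (by rw [h]; exact mem_singleton_self _)))
  have hPk1 : x ++ [k-1] ∈ preferMaxAux k n tb := by
    by_contra hP
    have h1 := Nat.le_findGreatest (P := fun τ => (x ++ [τ]) ∉ preferMaxAux k n tb)
      (le_refl (k-1)) hP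
    have h2 := Nat.findGreatest_le (P := fun τ => (x ++ [τ]) ∉ preferMaxAux k n tb) (k-1)
    omega
  have hxrep : x = List.replicate (n-1) 0 := by
    obtain ⟨s₀, hs₀le, hs₀⟩ := exists_index hPk1
    rcases Nat.eq_zero_or_pos s₀ with rfl | hpos
    · rw [pm_zero] at hs₀
      exact (List.append_inj hs₀ (by simp [hxl])).1
    · exfalso
      obtain ⟨s', rfl⟩ : ∃ s', s₀ = s' + 1 := ⟨s₀ - 1, by omega⟩
      rw [pm_succ] at hs₀
      have hlen : x.length = (preferMax k n s').tail.length := by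
        rw [hxl, length_tail, length_pm hk0 hn]
      obtain ⟨he1, _⟩ := List.append_inj hs₀ hlen
      -- w s' = (k-1) :: x  and  w tb = (k-1) :: x
      have hs'lt : s' < tb := by omega
      have hws'mem : (k-1) ∈ preferMax k n s' := hmin s' (by omega)
      have hws' : preferMax k n s' = (k-1) :: x := by
        have hne := pm_ne_nil hk0 hn (k := k) (n := n) s'
        have hh := eq_headI_cons hne
        rw [← he1] at hh
        rcases mem_cons.1 (hh ▸ hws'mem) with h | h
        · rw [hh, ← h]
        · exact absurd h hk1x
      have hwtbmem : (k-1) ∈ preferMax k n tb := hmin tb (by omega)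
      have hwtb : preferMax k n tb = (k-1) :: x := by
        have hne := pm_ne_nil hk0 hn (k := k) (n := n) tb
        have hh := eq_headI_cons hne
        rw [← hxdef] at hh
        rcases mem_cons.1 (hh ▸ hwtbmem) with h | h
        · rw [hh, ← h]
        · exact absurd h hk1x
      obtain ⟨tb', rfl⟩ : ∃ tb', tb = tb' + 1 := ⟨tb - 1, by omega⟩
      have := (nodup_cons.1 (aux_succ k n tb' ▸ ndtb)).1
      exact this (by
        rw [show ((preferMax k n tb').tail ++ [Nat.findGreatest (fun τ =>
          ((preferMax k n tb').tail ++ [τ]) ∉ preferMaxAux k n tb') (k-1)])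
          = preferMax k n (tb' + 1) from rfl, hwtb, ← hws']
        exact mem_aux_of_le (by omega))
  have hwtb : preferMax k n tb = (k-1) :: List.replicate (n-1) 0 := by
    have hne := pm_ne_nil hk0 hn (k := k) (n := n) tb
    have hh := eq_headI_cons hne
    have hwtbmem : (k-1) ∈ preferMax k n tb := hmin tb (by omega)
    have hx2 : (preferMax k n tb).tail = List.replicate (n-1) 0 := by rw [← hxdef, hxrep]
    rw [hx2] at hh
    rcases mem_cons.1 (hh ▸ hwtbmem) with h | h
    · rw [hh, ← h]
    · exfalso; have := eq_of_mem_replicate h; omega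
  -- the chosen symbol is k-2
  have hPk2 : x ++ [k-2] ∉ preferMaxAux k n tb := by
    intro hmem
    obtain ⟨s₂, hs₂le, hs₂⟩ := exists_index hmem
    have := hmin s₂ (by omega)
    rw [← hs₂, hxrep] at this
    rcases mem_append.1 this with h | h
    · have := eq_of_mem_replicate h; omega
    · have := mem_singleton.1 h; omega
  have hτ : Nat.findGreatest (fun τ => (x ++ [τ]) ∉ preferMaxAux k n tb) (k-1) = k-2 := by
    have h1 := Nat.findGreatest_le (P := fun τ => (x ++ [τ]) ∉ preferMaxAux k n tb) (k-1)
    have h2 := Nat.le_findGreatest (m := k-2) (n := k-1)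
      (P := fun τ => (x ++ [τ]) ∉ preferMaxAux k n tb) (by omega) hPk2
    omega
  have hwt₁' : preferMax k n t₁ = List.replicate (n-1) 0 ++ [k-2] := by
    rw [hwt₁, hτ, hxrep]
  -- flow balance at time tb
  have hst : (preferMax k n tb).tail = List.replicate (n-1) 0 := by rw [← hxdef, hxrep]
  have hbal : ∀ z, exiC k n tb z = entC k n tb z := by
    intro z
    have h := flow k n z tb
    rw [hst] at h
    omega
  -- T induction: all windows of the form u ++ (k-1) :: 0^j occurred by time tb
  have hT : ∀ i ≤ n-1, ∀ u : List ℕ, u.length = i → (∀ c ∈ u, c < k) →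
      u ++ (k-1) :: List.replicate (n-1-i) 0 ∈ preferMaxAux k n tb := by
    intro i
    induction i with
    | zero =>
      intro _ u hul _
      rw [length_eq_zero_iff.1 hul, nil_append, Nat.sub_zero, ← hwtb]
      exact mem_aux_of_le (le_refl tb)
    | succ i ih =>
      intro hi u hul huc
      cases u with
      | nil => simp at hul
      | cons σ u' =>
        have hu'l : u'.length = i := by simpa using hul
        have hzl : (u' ++ (k-1) :: List.replicate (n-1-(i+1)) 0).length = n - 1 := by
          rw [length_append, length_cons, length_replicate, hu'l]
          omega
        have hz0 : (u' ++ (k-1) :: List.replicate (n-1-(i+1)) 0) ++ [0]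
            ∈ preferMaxAux k n tb := by
          have hmem := ih (by omega) u' hu'l (fun c hc => huc c (mem_cons_of_mem _ hc))
          have he : (u' ++ (k-1) :: List.replicate (n-1-(i+1)) 0) ++ [0]
              = u' ++ (k-1) :: List.replicate (n-1-i) 0 := by
            have harg : n-1-(i+1)+1 = n-1-i := by omega
            rw [append_assoc, cons_append, ← replicate_succ', harg]
          rw [he]
          exact hmem
        have hzall : ∀ τ < k, (u' ++ (k-1) :: List.replicate (n-1-(i+1)) 0) ++ [τ]
            ∈ preferMaxAux k n tb :=
          fun τ hτ => mono_mem hk0 hn tb hzl hz0 (Nat.zero_le τ) hτ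
        have hent : k ≤ entC k n tb (u' ++ (k-1) :: List.replicate (n-1-(i+1)) 0) := by
          rw [← hbal]
          exact exi_ge hzall
        have := mem_cons_of_ent_ge hk0 hn ndtb hent σ (huc σ (mem_cons_self))
        simpa using this
  -- R induction: all windows containing k-1 occurred by time tb
  have hR : ∀ j ≤ n-1, ∀ a b : List ℕ, a.length = n-1-j → b.length = j →
      (∀ c ∈ a, c < k) → (∀ c ∈ b, c < k) →
      a ++ (k-1) :: b ∈ preferMaxAux k n tb := by
    intro j
    induction j with
    | zero =>
      intro _ a b ha hb hca _
      rw [length_eq_zero_iff.1 hb]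
      have := hT (n-1) (le_refl _) a (by omega) hca
      simpa using this
    | succ j ih =>
      intro hj a b ha hb hca hcb
      have hbne : b ≠ [] := by intro h; rw [h] at hb; simp at hb
      have hbd : b = b.dropLast ++ [b.getLast?.getD 0] := eq_concat hbne
      have hb'l : b.dropLast.length = j := by rw [length_dropLast, hb]; omega
      have hallin : ∀ σ < k, σ :: (a ++ (k-1) :: b.dropLast) ∈ preferMaxAux k n tb := by
        intro σ hσ
        have := ih (by omega) (σ :: a) b.dropLast (by simp [ha]; omega) hb'l
          (by
            intro c hc
            rcases mem_cons.1 hc with rfl | hc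
            · exact hσ
            · exact hca c hc)
          (fun c hc => hcb c (dropLast_subset _ hc))
        simpa using this
      have hexi : k ≤ exiC k n tb (a ++ (k-1) :: b.dropLast) := by
        rw [hbal]
        exact ent_ge hallin
      have hmem := mem_concat_of_exi_ge hk0 hn ndtb hexi (b.getLast?.getD 0)
        (hcb _ (getD_getLast?_mem hbne))
      have he : a ++ (k-1) :: b = (a ++ (k-1) :: b.dropLast) ++ [b.getLast?.getD 0] := by
        conv_lhs => rw [hbd]
        rw [append_assoc, cons_append]
      rw [he]
      exact hmem
  have hcontain : ∀ u : List ℕ, u.length = n → (∀ c ∈ u, c < k) → (k-1) ∈ u →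
      u ∈ preferMaxAux k n tb := by
    intro u hul huc hmem
    obtain ⟨a, b, rfl⟩ := List.append_of_mem hmem
    have hlen : a.length + (b.length + 1) = n := by
      simpa using hul
    exact hR b.length (by omega) a b (by omega) rfl
      (fun c hc => huc c (mem_append.2 (Or.inl hc)))
      (fun c hc => huc c (mem_append.2 (Or.inr (mem_cons_of_mem _ hc))))
  -- counting: t₁ = k^n - (k-1)^n
  have hsub1 : preferMaxAux k n tb ⊆ (allTup k n).filter (fun u => decide ((k-1) ∈ u)) := by
    intro u hu
    obtain ⟨s, hs, rfl⟩ := exists_index hu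
    refine mem_filter.2 ⟨mem_allTup.2 (shape hk0 hn tb _ hu), ?_⟩
    rw [decide_eq_true_iff]
    exact hmin s (by omega)
  have hsub2 : (allTup k n).filter (fun u => decide ((k-1) ∈ u)) ⊆ preferMaxAux k n tb := by
    intro u hu
    obtain ⟨h1, h2⟩ := mem_filter.1 hu
    rw [decide_eq_true_iff] at h2
    exact hcontain u (mem_allTup.1 h1).1 (mem_allTup.1 h1).2 h2
  have hlen1 := (ndtb.subperm hsub1).length_le
  have hlen2 := (((nodup_allTup (k := k) n).filter _).subperm hsub2).length_le
  rw [length_filter_contains hk, length_aux] at hlen1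
  rw [length_filter_contains hk, length_aux] at hlen2
  have ht₁eq : t₁ = k^n - (k-1)^n := by omega
  refine ⟨by omega, ?_, ?_, ?_⟩
  · rw [← ht₁eq]
    exact hwt₁'
  · intro s hs
    exact hmin s (by omega)
  · intro z hzl hzc
    have := hT (n-1) (le_refl _) z (by omega) hzc
    have he : tb = k^n - (k-1)^n - 1 := by omega
    rw [← he]
    simpa using this

end Onion

/-- **Onion Theorem.** For every `k > 1` and `n ≥ 1`, the `(k-1,n)`-prefer-max sequence
is a suffix of the `(k,n)`-prefer-max sequence: for every `i < (k-1)^n`,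
`w_{(k^n-(k-1)^n)+i} = v_i`, where `w` is the `(k,n)`- and `v` the `(k-1,n)`-prefer-max
sequence of windows. -/
theorem preferMax_onion (k n : ℕ) (hk : 1 < k) (hn : 1 ≤ n) :
    ∀ i < (k - 1) ^ n,
      preferMax k n (k ^ n - (k - 1) ^ n + i) = preferMax (k - 1) n i := by
  open Onion in
  have hk0 : 0 < k := by omega
  have hk1 : 0 < k - 1 := by omega
  have hn0 : 0 < n := hn
  obtain ⟨hpos, hbase, hpure, hend⟩ := Onion.phase hk hn0
  suffices Inv : ∀ i, preferMax k n (k^n - (k-1)^n + i) = preferMax (k-1) n i ∧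
      ∀ u : List ℕ, (∀ c ∈ u, c < k-1) →
        (u ∈ preferMaxAux k n (k^n - (k-1)^n + i) ↔ u ∈ preferMaxAux (k-1) n i) by
    intro i _
    exact (Inv i).1
  intro i
  induction i with
  | zero =>
    have hv0 : preferMax (k-1) n 0 = List.replicate (n-1) 0 ++ [k-2] := by
      have h : k-1-1 = k-2 := by omega
      rw [Onion.pm_zero, h]
    constructor
    · rw [Nat.add_zero, hbase, hv0]
    · intro u hu
      rw [Nat.add_zero]
      constructor
      · intro hmem
        obtain ⟨s, hs, rfl⟩ := Onion.exists_index hmem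
        rcases Nat.lt_or_ge s (k^n - (k-1)^n) with h | h
        · exfalso
          have h1 := hpure s h
          have := hu _ h1
          omega
        · have hseq : s = k^n - (k-1)^n := by omega
          subst hseq
          rw [hbase, ← hv0]
          exact Onion.mem_aux_of_le (le_refl 0)
      · intro hmem
        have h1 : u = preferMax (k-1) n 0 := by
          obtain ⟨s, hs, h⟩ := Onion.exists_index hmem
          interval_cases s
          exact h
        rw [h1, hv0, ← hbase]
        exact Onion.mem_aux_of_le (le_refl _)
  | succ i ih =>
    obtain ⟨ih1, ih2⟩ := ih
    set x := (preferMax (k-1) n i).tail with hx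
    have hx2 : (preferMax k n (k^n - (k-1)^n + i)).tail = x := by rw [ih1]
    have hxl : x.length = n - 1 := by rw [hx, List.length_tail, Onion.length_pm hk1 hn0]
    have hxc : ∀ c ∈ x, c < k - 1 := by
      intro c hc
      exact (Onion.shape hk1 hn0 i _ (Onion.mem_aux_of_le (le_refl i))).2 c
        (List.mem_of_mem_tail (hx ▸ hc))
    have hkey : x ++ [k-1] ∈ preferMaxAux k n (k^n - (k-1)^n + i) :=
      Onion.aux_subset (by omega)
        (hend x hxl (fun c hc => by have := hxc c hc; omega))
    have hfg : Nat.findGreatest (fun τ => (x ++ [τ]) ∉ preferMaxAux k n (k^n - (k-1)^n + i))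
        (k-1)
        = Nat.findGreatest (fun τ => (x ++ [τ]) ∉ preferMaxAux (k-1) n i) (k-1-1) := by
      have h1 : Nat.findGreatest
          (fun τ => (x ++ [τ]) ∉ preferMaxAux k n (k^n - (k-1)^n + i)) (k-1)
          = Nat.findGreatest
            (fun τ => (x ++ [τ]) ∉ preferMaxAux k n (k^n - (k-1)^n + i)) (k-1-1) := by
        refine Onion.fg_drop_top (by omega) ?_
        simp only [not_not]
        exact hkey
      rw [h1]
      refine Onion.fg_congr (k-1-1) ?_
      intro m hm
      exact not_congr (ih2 (x ++ [m]) (by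
        intro c hc
        rcases List.mem_append.1 hc with h | h
        · exact hxc c h
        · rw [List.mem_singleton.1 h]; omega))
    have hstep : k^n - (k-1)^n + (i+1) = (k^n - (k-1)^n + i) + 1 := by omega
    constructor
    · rw [hstep, Onion.pm_succ, Onion.pm_succ, hx2, ← hx, hfg]
    · intro u hu
      rw [hstep, Onion.aux_succ, Onion.aux_succ, List.mem_cons, List.mem_cons,
        hx2, ← hx, hfg, ih2 u hu]
end

section
/- For every k > 1 and every n ≥ 1, the first k^n - (k-1)^n windows of the (k,n)-prefer-max cycle are exactly the words of [k]^n that contain the symbol k-1; that is, {w_0, w_1, ..., w_{k^n-(k-1)^n-1}} = [k]^n \ [k-1]^n. -/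
namespace PreferMaxLayer

lemma aux_succ (k n i : ℕ) :
    preferMaxAux k n (i + 1) = preferMax k n (i + 1) :: preferMaxAux k n i := rfl

lemma preferMax_succ (k n i : ℕ) :
    preferMax k n (i + 1) =
      (preferMax k n i).tail ++
        [Nat.findGreatest (fun τ => ((preferMax k n i).tail ++ [τ]) ∉ preferMaxAux k n i)
          (k - 1)] := rfl

lemma preferMax_zero (k n : ℕ) :
    preferMax k n 0 = List.replicate (n - 1) 0 ++ [k - 1] := rfl

lemma length_aux (k n : ℕ) : ∀ i, (preferMaxAux k n i).length = i + 1
  | 0 => rfl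
  | i + 1 => by rw [aux_succ, List.length_cons, length_aux k n i]

lemma headI_mem_of_ne_nil {α : Type} [Inhabited α] {l : List α} (h : l ≠ []) :
    l.headI ∈ l := by
  cases l with
  | nil => exact absurd rfl h
  | cons a t => simp

lemma headI_mem (k n i : ℕ) : preferMax k n i ∈ preferMaxAux k n i := by
  have h := length_aux k n i
  have hne : preferMaxAux k n i ≠ [] := by
    intro hh; rw [hh] at h; simp at h
  exact headI_mem_of_ne_nil hne

lemma aux_suffix (k n : ℕ) {j i : ℕ} (h : j ≤ i) :
    List.IsSuffix (preferMaxAux k n j) (preferMaxAux k n i) := by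
  induction i, h using Nat.le_induction with
  | base => exact List.suffix_refl _
  | succ i hji IH =>
    rw [aux_succ]
    exact IH.trans (List.suffix_cons _ _)

lemma mem_mono (k n : ℕ) {j i : ℕ} {w : List ℕ} (h : j ≤ i)
    (hw : w ∈ preferMaxAux k n j) : w ∈ preferMaxAux k n i :=
  (aux_suffix k n h).sublist.subset hw

lemma mem_aux_iff {k n m : ℕ} {w : List ℕ} :
    w ∈ preferMaxAux k n m ↔ ∃ j, j ≤ m ∧ preferMax k n j = w := by
  induction m with
  | zero =>
    constructor
    · intro h
      simp only [preferMaxAux, List.mem_singleton] at h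
      exact ⟨0, le_rfl, by rw [preferMax_zero, h]⟩
    · rintro ⟨j, hj, rfl⟩
      have : j = 0 := Nat.le_zero.mp hj
      subst this
      exact headI_mem k n 0
  | succ m IH =>
    rw [aux_succ, List.mem_cons, IH]
    constructor
    · rintro (rfl | ⟨j, hj, rfl⟩)
      · exact ⟨m + 1, le_rfl, rfl⟩
      · exact ⟨j, Nat.le_succ_of_le hj, rfl⟩
    · rintro ⟨j, hj, rfl⟩
      rcases Nat.lt_or_ge j (m + 1) with h | h
      · exact Or.inr ⟨j, by omega, rfl⟩
      · have : j = m + 1 := by omega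
        subst this
        exact Or.inl rfl

lemma preferMax_inj {k n i : ℕ} (hnd : (preferMaxAux k n i).Nodup) :
    ∀ {a b : ℕ}, a ≤ i → b ≤ i → preferMax k n a = preferMax k n b → a = b := by
  have key : ∀ a b, a < b → b ≤ i → preferMax k n a ≠ preferMax k n b := by
    intro a b hab hbi heq
    obtain ⟨m, rfl⟩ : ∃ m, b = m + 1 := ⟨b - 1, by omega⟩
    have hndb : (preferMaxAux k n (m + 1)).Nodup :=
      hnd.sublist (aux_suffix k n hbi).sublist
    rw [aux_succ, List.nodup_cons] at hndb
    exact hndb.1 (heq ▸ mem_aux_iff.mpr ⟨a, by omega, rfl⟩)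
  intro a b ha hb h
  rcases lt_trichotomy a b with h' | h' | h'
  · exact absurd h (key a b h' hb)
  · exact h'
  · exact absurd h.symm (key b a h' ha)

lemma succ_decomp {k n j : ℕ} {z : List ℕ} {σ : ℕ}
    (h : preferMax k n (j + 1) = z ++ [σ]) :
    (preferMax k n j).tail = z ∧
      σ = Nat.findGreatest (fun τ => (z ++ [τ]) ∉ preferMaxAux k n j) (k - 1) := by
  rw [preferMax_succ] at h
  obtain ⟨h1, h2⟩ := List.append_inj' h rfl
  simp only [List.cons.injEq, and_true] at h2
  subst h1
  exact ⟨rfl, h2.symm⟩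

lemma greedy_up {k n j : ℕ} {z : List ℕ} {σ : ℕ}
    (h : preferMax k n (j + 1) = z ++ [σ]) {σ' : ℕ} (h1 : σ < σ') (h2 : σ' ≤ k - 1) :
    z ++ [σ'] ∈ preferMaxAux k n j := by
  obtain ⟨-, hfg⟩ := succ_decomp h
  rw [hfg] at h1
  by_contra hc
  exact Nat.findGreatest_is_greatest h1 h2 hc

/-- The invariant carried through the first layer. -/
def Good (k n i : ℕ) : Prop :=
  (preferMaxAux k n i).Nodup ∧
    ∀ w ∈ preferMaxAux k n i, w.length = n ∧ (∀ σ ∈ w, σ < k) ∧ (k - 1) ∈ w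

lemma pred_all {k n i : ℕ} (hn : 1 ≤ n) (hG : Good k n i)
    {z : List ℕ} (hne : z ≠ List.replicate (n - 1) 0)
    (hall : ∀ σ, σ < k → z ++ [σ] ∈ preferMaxAux k n i) :
    ∀ c, c < k → ∃ j, j < i ∧ preferMax k n j = c :: z := by
  obtain ⟨hnd, hprop⟩ := hG
  have key : ∀ σ, ∃ j h, σ < k →
      j < i ∧ h < k ∧ preferMax k n j = h :: z ∧ preferMax k n (j + 1) = z ++ [σ] := by
    intro σ
    by_cases hσ : σ < k
    · obtain ⟨j, hji, hjW⟩ := mem_aux_iff.mp (hall σ hσ)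
      cases j with
      | zero =>
        exfalso
        rw [preferMax_zero] at hjW
        exact hne ((List.append_inj' hjW rfl).1).symm
      | succ j' =>
        have ht := (succ_decomp hjW).1
        have hmem : preferMax k n j' ∈ preferMaxAux k n i := mem_aux_iff.mpr ⟨j', by omega, rfl⟩
        obtain ⟨hlen, hlt, -⟩ := hprop _ hmem
        have hnil : preferMax k n j' ≠ [] := by
          intro hnil; rw [hnil] at hlen; simp at hlen; omega
        refine ⟨j', (preferMax k n j').head hnil, fun _ => ⟨by omega,
          hlt _ (List.head_mem hnil), ?_, hjW⟩⟩
        rw [← ht]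
        exact (List.cons_head_tail hnil).symm
    · exact ⟨0, 0, fun h => absurd h hσ⟩
  choose J H hJH using key
  have hinj : Set.InjOn H (Finset.range k) := by
    intro a ha b hb hab
    simp only [Finset.coe_range, Set.mem_Iio] at ha hb
    obtain ⟨hJa, hHa, hWa, hWa'⟩ := hJH a ha
    obtain ⟨hJb, hHb, hWb, hWb'⟩ := hJH b hb
    have hJ : J a = J b := preferMax_inj hnd (by omega) (by omega)
      (by rw [hWa, hWb, hab])
    have h2 : z ++ [a] = z ++ [b] := by rw [← hWa', ← hWb', hJ]
    have := List.append_cancel_left h2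
    simpa using this
  have hsubI : Finset.image H (Finset.range k) ⊆ Finset.range k := by
    intro c hc
    obtain ⟨σ, hσ, rfl⟩ := Finset.mem_image.mp hc
    exact Finset.mem_range.mpr (hJH σ (Finset.mem_range.mp hσ)).2.1
  have heq : Finset.image H (Finset.range k) = Finset.range k :=
    Finset.eq_of_subset_of_card_le hsubI
      (le_of_eq (Finset.card_image_of_injOn hinj).symm)
  intro c hc
  have hcmem : c ∈ Finset.image H (Finset.range k) := by
    rw [heq]; exact Finset.mem_range.mpr hc
  obtain ⟨σ, hσ, hHσ⟩ := Finset.mem_image.mp hcmem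
  obtain ⟨hJσ, -, hWσ, -⟩ := hJH σ (Finset.mem_range.mp hσ)
  exact ⟨J σ, hJσ, by rw [hWσ, hHσ]⟩

lemma ruleR {k n i : ℕ} (hk : 1 < k) (hn : 1 ≤ n) (hG : Good k n i)
    {z : List ℕ} (hzk : k - 1 ∈ z)
    (h0 : z ++ [0] ∈ preferMaxAux k n i) :
    ∀ c, c < k → ∃ j, j < i ∧ preferMax k n j = c :: z := by
  obtain ⟨j, hji, hjW⟩ := mem_aux_iff.mp h0
  have hne : z ≠ List.replicate (n - 1) 0 := by
    intro h; rw [h] at hzk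
    have := List.eq_of_mem_replicate hzk; omega
  cases j with
  | zero =>
    exfalso
    rw [preferMax_zero] at hjW
    have h2 := (List.append_inj' hjW rfl).2
    simp only [List.cons.injEq, and_true] at h2
    omega
  | succ j' =>
    have hall : ∀ σ, σ < k → z ++ [σ] ∈ preferMaxAux k n i := by
      intro σ hσ
      rcases Nat.eq_zero_or_pos σ with rfl | hσ0
      · exact h0
      · exact mem_mono k n (by omega) (greedy_up hjW hσ0 (by omega))
    exact pred_all hn hG hne hall

lemma exists_last_occ {α : Type} (a : α) : ∀ l : List α, a ∈ l →
    ∃ y s, l = y ++ a :: s ∧ a ∉ s := by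
  intro l
  induction l with
  | nil => intro h; simp at h
  | cons b l' IH =>
    intro h
    by_cases h' : a ∈ l'
    · obtain ⟨y, s, rfl, hs⟩ := IH h'
      exact ⟨b :: y, s, rfl, hs⟩
    · have hab : a = b := by
        rcases List.mem_cons.mp h with h | h
        · exact h
        · exact absurd h h'
      exact ⟨[], l', by rw [hab]; rfl, h'⟩

lemma layer_complete {k n i : ℕ} (hk : 1 < k) (hn : 1 ≤ n)
    (hG : Good k n i) (hn2 : 2 ≤ n)
    (hWi : preferMax k n i = (k - 1) :: List.replicate (n - 1) 0) :
    ∀ u : List ℕ, u.length = n → (∀ σ ∈ u, σ < k) → (k - 1) ∈ u →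
      u ∈ preferMaxAux k n i := by
  obtain ⟨hnd, hprop⟩ := hG
  have hA : ∀ y : List ℕ, (∀ σ ∈ y, σ < k) → y.length ≤ n - 1 →
      y ++ (k - 1) :: List.replicate (n - 1 - y.length) 0 ∈ preferMaxAux k n i := by
    intro y
    induction y with
    | nil =>
      intro _ _
      simpa [hWi] using headI_mem k n i
    | cons c y' IH =>
      intro hlt hlen
      simp only [List.length_cons] at hlen ⊢
      have harith : n - 1 - y'.length = (n - 1 - (y'.length + 1)) + 1 := by omega
      have h0 : (y' ++ (k - 1) :: List.replicate (n - 1 - (y'.length + 1)) 0) ++ [0]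
          ∈ preferMaxAux k n i := by
        have hIH := IH (fun σ h => hlt σ (List.mem_cons_of_mem _ h)) (by omega)
        rw [harith, List.replicate_succ'] at hIH
        simpa [List.append_assoc] using hIH
      obtain ⟨j, hj, hjW⟩ := ruleR hk hn ⟨hnd, hprop⟩ (by simp) h0 c
        (hlt c List.mem_cons_self)
      have hm : preferMax k n j ∈ preferMaxAux k n i := mem_aux_iff.mpr ⟨j, by omega, rfl⟩
      rw [hjW] at hm
      simpa [List.cons_append] using hm
  have hB : ∀ z : List ℕ, z.length = n - 1 → (∀ σ ∈ z, σ < k) → (k - 1) ∉ z →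
      (k - 1) :: z ∈ preferMaxAux k n i := by
    intro z hzl hzlt hzk
    have hz := hA z hzlt (le_of_eq hzl)
    rw [hzl, Nat.sub_self, List.replicate_zero] at hz
    obtain ⟨j, hji, hjW⟩ := mem_aux_iff.mp (by simpa using hz)
    cases j with
    | zero =>
      rw [preferMax_zero] at hjW
      have hzrep := (List.append_inj' hjW rfl).1
      rw [← hzrep, ← hWi]
      exact headI_mem k n i
    | succ j' =>
      have ht := (succ_decomp hjW).1
      have hmem' : preferMax k n j' ∈ preferMaxAux k n i := mem_aux_iff.mpr ⟨j', by omega, rfl⟩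
      obtain ⟨hlen', -, hk1⟩ := hprop _ hmem'
      have hnil' : preferMax k n j' ≠ [] := by
        intro hnil; rw [hnil] at hlen'; simp at hlen'; omega
      have hco := List.cons_head_tail (l := preferMax k n j') hnil'
      rw [ht] at hco
      have hhead : (preferMax k n j').head hnil' = k - 1 := by
        rw [← hco, List.mem_cons] at hk1
        rcases hk1 with h | h
        · exact h.symm
        · exact absurd h hzk
      have : (k - 1) :: z = preferMax k n j' := by rw [← hhead]; exact hco
      rw [this]
      exact hmem'
  have hT : ∀ y : List ℕ, (∀ σ ∈ y, σ < k) → ∀ s : List ℕ, (∀ σ ∈ s, σ < k - 1) →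
      y.length + 1 + s.length = n → y ++ (k - 1) :: s ∈ preferMaxAux k n i := by
    intro y
    induction y with
    | nil =>
      intro _ s hs hlen
      simp only [List.length_nil] at hlen
      have := hB s (by omega) (fun σ h => by have := hs σ h; omega)
        (fun hm => by have := hs _ hm; omega)
      simpa using this
    | cons c y' IH =>
      intro hlt s hs hlen
      simp only [List.length_cons] at hlen
      have h0 : (y' ++ (k - 1) :: s) ++ [0] ∈ preferMaxAux k n i := by
        have hIH := IH (fun σ h => hlt σ (List.mem_cons_of_mem _ h)) (s ++ [0])
          (by
            intro σ h
            rcases List.mem_append.mp h with h | h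
            · exact hs σ h
            · simp at h; omega)
          (by simp; omega)
        simpa [List.append_assoc] using hIH
      obtain ⟨j, hj, hjW⟩ := ruleR hk hn ⟨hnd, hprop⟩ (by simp) h0 c
        (hlt c List.mem_cons_self)
      have hm : preferMax k n j ∈ preferMaxAux k n i := mem_aux_iff.mpr ⟨j, by omega, rfl⟩
      rw [hjW] at hm
      simpa [List.cons_append] using hm
  intro u hul hult humem
  obtain ⟨y, s, rfl, hs⟩ := exists_last_occ (k - 1) u humem
  have hyl : ∀ σ ∈ y, σ < k := fun σ h => hult σ (List.mem_append.mpr (Or.inl h))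
  have hsl : ∀ σ ∈ s, σ < k - 1 := by
    intro σ h
    have h1 := hult σ (List.mem_append.mpr (Or.inr (List.mem_cons_of_mem _ h)))
    have h2 : σ ≠ k - 1 := fun he => hs (he ▸ h)
    omega
  apply hT y hyl s hsl
  simp at hul
  omega

lemma exists_words_finset (m n : ℕ) :
    ∃ F : Finset (List ℕ), F.card = m ^ n ∧
      ∀ u : List ℕ, u ∈ F ↔ u.length = n ∧ ∀ σ ∈ u, σ < m := by
  refine ⟨Finset.image (fun f : Fin n → Fin m => List.ofFn fun j => (f j : ℕ))
    Finset.univ, ?_, ?_⟩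
  · have hinj : Function.Injective (fun f : Fin n → Fin m => List.ofFn fun j => (f j : ℕ)) := by
      intro f g h
      have := List.ofFn_injective h
      funext j
      exact Fin.ext (congrFun this j)
    rw [Finset.card_image_of_injective _ hinj, Finset.card_univ, Fintype.card_fun]
    simp
  · intro u
    constructor
    · intro h
      obtain ⟨f, -, rfl⟩ := Finset.mem_image.mp h
      refine ⟨by simp, ?_⟩
      intro σ hσ
      obtain ⟨j, rfl⟩ := List.mem_ofFn.mp hσ
      exact (f j).isLt
    · rintro ⟨hl, hb⟩
      refine Finset.mem_image.mpr
        ⟨fun j => ⟨u[(j : ℕ)]'(by rw [hl]; exact j.isLt),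
          hb _ (List.getElem_mem _)⟩, Finset.mem_univ _, ?_⟩
      refine List.ext_getElem (by simp [hl]) ?_
      intro j h1 h2
      simp [List.getElem_ofFn]

lemma layer_card_le {k n i : ℕ} (hk : 1 < k) (hn : 1 ≤ n)
    (hnd : (preferMaxAux k n i).Nodup)
    (hsub : ∀ u : List ℕ, u.length = n → (∀ σ ∈ u, σ < k) → (k - 1) ∈ u →
      u ∈ preferMaxAux k n i) :
    k ^ n - (k - 1) ^ n ≤ i + 1 := by
  obtain ⟨Fk, hFkc, hFk⟩ := exists_words_finset k n
  obtain ⟨Fk', hFk'c, hFk'⟩ := exists_words_finset (k - 1) n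
  have hss : Fk' ⊆ Fk := by
    intro u hu
    obtain ⟨h1, h2⟩ := (hFk' u).mp hu
    exact (hFk u).mpr ⟨h1, fun σ h => by have := h2 σ h; omega⟩
  have hsub2 : Fk \ Fk' ⊆ (preferMaxAux k n i).toFinset := by
    intro u hu
    rw [Finset.mem_sdiff] at hu
    obtain ⟨h1, h2⟩ := (hFk u).mp hu.1
    have h3 : (k - 1) ∈ u := by
      by_contra h3
      apply hu.2
      refine (hFk' u).mpr ⟨h1, ?_⟩
      intro σ hσ
      have hlt := h2 σ hσ
      have hne : σ ≠ k - 1 := fun he => h3 (he ▸ hσ)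
      omega
    exact List.mem_toFinset.mpr (hsub u h1 h2 h3)
  have hcard := Finset.card_le_card hsub2
  rw [Finset.card_sdiff_of_subset hss, hFkc, hFk'c, List.toFinset_card_of_nodup hnd,
    length_aux] at hcard
  exact hcard

lemma good_step {k n i : ℕ} (hk : 1 < k) (hn : 1 ≤ n)
    (hG : Good k n i) (hi : i + 1 < k ^ n - (k - 1) ^ n) : Good k n (i + 1) := by
  obtain ⟨hnd, hprop⟩ := hG
  obtain ⟨hleni, hlti, hmemi⟩ := hprop _ (headI_mem k n i)
  have hnil : preferMax k n i ≠ [] := by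
    intro h; rw [h] at hleni; simp at hleni; omega
  have hxlen : (preferMax k n i).tail.length = n - 1 := by
    rw [List.length_tail, hleni]
  have hxlt : ∀ σ ∈ (preferMax k n i).tail, σ < k :=
    fun σ h => hlti σ (List.mem_of_mem_tail h)
  have hWi : (preferMax k n i).head hnil :: (preferMax k n i).tail = preferMax k n i :=
    List.cons_head_tail hnil
  have hkey : (k - 1) ∈ (preferMax k n i).tail ∨
      ((preferMax k n i).tail ++ [k - 1]) ∉ preferMaxAux k n i := by
    by_cases hxk : (k - 1) ∈ (preferMax k n i).tail
    · exact Or.inl hxk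
    right
    intro hmem
    obtain ⟨j, hji, hjW⟩ := mem_aux_iff.mp hmem
    cases j with
    | zero =>
      rw [preferMax_zero] at hjW
      have hz := (List.append_inj' hjW rfl).1
      have hhead : (preferMax k n i).head hnil = k - 1 := by
        have hm := hmemi
        rw [← hWi, List.mem_cons] at hm
        rcases hm with h | h
        · exact h.symm
        · exact absurd h hxk
      have hWi' : preferMax k n i = (k - 1) :: List.replicate (n - 1) 0 := by
        rw [← hWi, hhead, hz]
      have hn2 : 2 ≤ n := by
        rcases Nat.lt_or_ge n 2 with h | h
        · have : n = 1 := by omega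
          subst this
          rw [pow_one, pow_one] at hi
          omega
        · exact h
      have hsub := layer_complete hk hn ⟨hnd, hprop⟩ hn2 hWi'
      have := layer_card_le hk hn hnd hsub
      omega
    | succ j' =>
      have ht := (succ_decomp hjW).1
      have hmem' : preferMax k n j' ∈ preferMaxAux k n i := mem_aux_iff.mpr ⟨j', by omega, rfl⟩
      obtain ⟨hlen', -, hmem3⟩ := hprop _ hmem'
      have hnil' : preferMax k n j' ≠ [] := by
        intro h; rw [h] at hlen'; simp at hlen'; omega
      have hco := List.cons_head_tail (l := preferMax k n j') hnil'
      rw [ht] at hco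
      have hhead' : (preferMax k n j').head hnil' = k - 1 := by
        rw [← hco, List.mem_cons] at hmem3
        rcases hmem3 with h | h
        · exact h.symm
        · exact absurd h hxk
      have hheadi : (preferMax k n i).head hnil = k - 1 := by
        have hm := hmemi
        rw [← hWi, List.mem_cons] at hm
        rcases hm with h | h
        · exact h.symm
        · exact absurd h hxk
      have e1 : preferMax k n j' = (k - 1) :: (preferMax k n i).tail := by
        rw [← hhead']; exact hco.symm
      have e2 : preferMax k n i = (k - 1) :: (preferMax k n i).tail := by
        rw [← hheadi]; exact hWi.symm
      have heqw : preferMax k n j' = preferMax k n i := e1.trans e2.symm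
      have := preferMax_inj hnd (a := j') (b := i) (by omega) le_rfl heqw
      omega
  have hex : ∃ τ, τ ≤ k - 1 ∧ ((preferMax k n i).tail ++ [τ]) ∉ preferMaxAux k n i := by
    rcases hkey with hxk | hnew
    · by_contra hc
      push_neg at hc
      have hall : ∀ σ, σ < k → (preferMax k n i).tail ++ [σ] ∈ preferMaxAux k n i :=
        fun σ hσ => hc σ (by omega)
      have hne : (preferMax k n i).tail ≠ List.replicate (n - 1) 0 := by
        intro h; rw [h] at hxk
        have := List.eq_of_mem_replicate hxk; omega
      obtain ⟨j, hj, hjW⟩ := pred_all hn ⟨hnd, hprop⟩ hne hall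
        ((preferMax k n i).head hnil) (hlti _ (List.head_mem hnil))
      have : j = i := preferMax_inj hnd (by omega) le_rfl (by rw [hjW, hWi])
      omega
    · exact ⟨k - 1, le_rfl, hnew⟩
  obtain ⟨τ0, hτ0, hP0⟩ := hex
  have hfgP : (preferMax k n i).tail ++
      [Nat.findGreatest (fun τ => ((preferMax k n i).tail ++ [τ]) ∉ preferMaxAux k n i)
        (k - 1)] ∉ preferMaxAux k n i :=
    Nat.findGreatest_spec
      (P := fun τ => ((preferMax k n i).tail ++ [τ]) ∉ preferMaxAux k n i) hτ0 hP0
  have hfgle : Nat.findGreatest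
      (fun τ => ((preferMax k n i).tail ++ [τ]) ∉ preferMaxAux k n i) (k - 1) ≤ k - 1 :=
    Nat.findGreatest_le _
  constructor
  · rw [aux_succ, List.nodup_cons]
    refine ⟨?_, hnd⟩
    rw [preferMax_succ]
    exact hfgP
  · intro w hw
    rw [aux_succ, List.mem_cons] at hw
    rcases hw with rfl | hw
    · rw [preferMax_succ]
      refine ⟨?_, ?_, ?_⟩
      · rw [List.length_append, hxlen]
        simp
        omega
      · intro σ hσ
        rcases List.mem_append.mp hσ with h | h
        · exact hxlt σ h
        · simp at h
          omega
      · rcases hkey with hxk | hnew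
        · exact List.mem_append.mpr (Or.inl hxk)
        · have hfgk : Nat.findGreatest
              (fun τ => ((preferMax k n i).tail ++ [τ]) ∉ preferMaxAux k n i) (k - 1)
              = k - 1 := le_antisymm hfgle (Nat.le_findGreatest le_rfl hnew)
          rw [hfgk]
          exact List.mem_append.mpr (Or.inr (by simp))
    · exact hprop w hw

lemma good_all {k n : ℕ} (hk : 1 < k) (hn : 1 ≤ n) :
    ∀ i, i < k ^ n - (k - 1) ^ n → Good k n i := by
  intro i
  induction i with
  | zero =>
    intro _
    constructor
    · simp [preferMaxAux]
    · intro w hw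
      simp only [preferMaxAux, List.mem_singleton] at hw
      subst hw
      refine ⟨by simp; omega, ?_, by simp⟩
      intro σ hσ
      rcases List.mem_append.mp hσ with h | h
      · have := List.eq_of_mem_replicate h; omega
      · simp at h; omega
  | succ i IH =>
    intro h
    exact good_step hk hn (IH (by omega)) h

end PreferMaxLayer

/-- For every `k > 1` and `n ≥ 1`, the first `k^n - (k-1)^n` windows of the
`(k,n)`-prefer-max cycle are exactly the words of `[k]^n` that contain the
symbol `k-1`, i.e. `{w_0, …, w_{k^n-(k-1)^n-1}} = [k]^n \ [k-1]^n`. -/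
theorem preferMax_first_layer (k n : ℕ) (hk : 1 < k) (hn : 1 ≤ n) (w : List ℕ) :
    (∃ i < k ^ n - (k - 1) ^ n, preferMax k n i = w) ↔
      (w.length = n ∧ (∀ σ ∈ w, σ < k) ∧ (k - 1) ∈ w) := by
  have hNpos : 0 < k ^ n - (k - 1) ^ n :=
    Nat.sub_pos_of_lt (Nat.pow_lt_pow_left (by omega) (by omega))
  constructor
  · rintro ⟨i, hi, rfl⟩
    obtain ⟨-, hprop⟩ := PreferMaxLayer.good_all hk hn i hi
    exact hprop _ (PreferMaxLayer.headI_mem k n i)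
  · rintro ⟨h1, h2, h3⟩
    set N := k ^ n - (k - 1) ^ n with hN
    obtain ⟨hnd, hprop⟩ := PreferMaxLayer.good_all hk hn (N - 1) (by omega)
    obtain ⟨Fk, hFkc, hFk⟩ := PreferMaxLayer.exists_words_finset k n
    obtain ⟨Fk', hFk'c, hFk'⟩ := PreferMaxLayer.exists_words_finset (k - 1) n
    have hss : Fk' ⊆ Fk := by
      intro u hu
      obtain ⟨ha, hb⟩ := (hFk' u).mp hu
      exact (hFk u).mpr ⟨ha, fun σ h => by have := hb σ h; omega⟩
    have hsub : (preferMaxAux k n (N - 1)).toFinset ⊆ Fk \ Fk' := by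
      intro u hu
      rw [List.mem_toFinset] at hu
      obtain ⟨hl, hb, hm⟩ := hprop u hu
      rw [Finset.mem_sdiff]
      refine ⟨(hFk u).mpr ⟨hl, hb⟩, fun hc => ?_⟩
      obtain ⟨-, hc2⟩ := (hFk' u).mp hc
      have := hc2 _ hm
      omega
    have h1c : (preferMaxAux k n (N - 1)).toFinset.card = N := by
      rw [List.toFinset_card_of_nodup hnd, PreferMaxLayer.length_aux]
      omega
    have h2c : (Fk \ Fk').card = N := by
      rw [Finset.card_sdiff_of_subset hss, hFkc, hFk'c]
    have heq : (preferMaxAux k n (N - 1)).toFinset = Fk \ Fk' :=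
      Finset.eq_of_subset_of_card_le hsub (by rw [h1c, h2c])
    have hwmem : w ∈ (preferMaxAux k n (N - 1)).toFinset := by
      rw [heq, Finset.mem_sdiff]
      refine ⟨(hFk w).mpr ⟨h1, h2⟩, fun hc => ?_⟩
      have := ((hFk' w).mp hc).2 _ h3
      omega
    obtain ⟨j, hj, hjW⟩ := PreferMaxLayer.mem_aux_iff.mp (List.mem_toFinset.mp hwmem)
    exact ⟨j, by omega, hjW⟩
end

section
/- Let (w_i)_{i=0}^{k^n-1} be the (k,n)-prefer-max cycle with k > 1, n ≥ 1, and let i_0 = min{ i : the symbol k-1 does not occur in w_i }. Then w_{i_0 - 1} = (k-1)0^{n-1}, i.e., the last window containing the symbol k-1 before position i_0 is the symbol k-1 followed by n-1 zeros. -/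
namespace PreferMaxProof

variable {k n : ℕ}

lemma aux_succ (k n i : ℕ) :
    preferMaxAux k n (i + 1) =
      ((preferMax k n i).tail ++
        [Nat.findGreatest (fun τ => ((preferMax k n i).tail ++ [τ]) ∉ preferMaxAux k n i)
          (k - 1)]) :: preferMaxAux k n i := rfl

lemma preferMax_zero (k n : ℕ) :
    preferMax k n 0 = List.replicate (n - 1) 0 ++ [k - 1] := rfl

lemma preferMax_succ (k n i : ℕ) :
    preferMax k n (i + 1) =
      (preferMax k n i).tail ++
        [Nat.findGreatest (fun τ => ((preferMax k n i).tail ++ [τ]) ∉ preferMaxAux k n i)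
          (k - 1)] := rfl

lemma length_aux (k n i : ℕ) : (preferMaxAux k n i).length = i + 1 := by
  induction i with
  | zero => rfl
  | succ i ih => rw [aux_succ, List.length_cons, ih]

lemma length_preferMax (hn : 1 ≤ n) (k i : ℕ) : (preferMax k n i).length = n := by
  induction i with
  | zero =>
    simp [preferMax_zero, Nat.sub_add_cancel hn]
  | succ i ih =>
    rw [preferMax_succ, List.length_append, List.length_tail, ih]
    simp [Nat.sub_add_cancel hn]

lemma preferMax_ne_nil (hn : 1 ≤ n) (k i : ℕ) : preferMax k n i ≠ [] := by
  intro h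
  have := length_preferMax hn k i
  rw [h] at this
  simp at this
  omega

lemma cons_headI_tail (hn : 1 ≤ n) (k i : ℕ) :
    (preferMax k n i).headI :: (preferMax k n i).tail = preferMax k n i := by
  cases h : preferMax k n i with
  | nil => exact absurd h (preferMax_ne_nil hn k i)
  | cons a l => simp

lemma headI_mem (hn : 1 ≤ n) (k i : ℕ) :
    (preferMax k n i).headI ∈ preferMax k n i := by
  cases h : preferMax k n i with
  | nil => exact absurd h (preferMax_ne_nil hn k i)
  | cons a l => simp

lemma mem_aux {k n i : ℕ} {y : List ℕ} :
    y ∈ preferMaxAux k n i ↔ ∃ j ≤ i, preferMax k n j = y := by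
  induction i with
  | zero =>
    constructor
    · intro h
      exact ⟨0, le_refl 0, (List.mem_singleton.mp h).symm⟩
    · rintro ⟨j, hj, hy⟩
      interval_cases j
      exact hy ▸ List.mem_singleton.mpr rfl
  | succ i ih =>
    rw [aux_succ, List.mem_cons]
    constructor
    · rintro (h | h)
      · exact ⟨i + 1, le_refl _, (preferMax_succ k n i).trans h.symm⟩
      · obtain ⟨j, hj, hy⟩ := ih.mp h
        exact ⟨j, Nat.le_succ_of_le hj, hy⟩
    · rintro ⟨j, hj, hy⟩
      rcases Nat.lt_or_ge j (i + 1) with h | h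
      · exact Or.inr (ih.mpr ⟨j, Nat.lt_succ_iff.mp h, hy⟩)
      · have : j = i + 1 := le_antisymm hj h
        subst this
        exact Or.inl (hy ▸ preferMax_succ k n i)

lemma letters_le (k n i : ℕ) {a : ℕ} (ha : a ∈ preferMax k n i) : a ≤ k - 1 := by
  induction i with
  | zero =>
    rw [preferMax_zero] at ha
    rcases List.mem_append.mp ha with h | h
    · exact (List.eq_of_mem_replicate h) ▸ Nat.zero_le _
    · exact (List.mem_singleton.mp h) ▸ le_refl _
  | succ i ih =>
    rw [preferMax_succ] at ha
    rcases List.mem_append.mp ha with h | h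
    · exact ih (List.mem_of_mem_tail h)
    · exact (List.mem_singleton.mp h) ▸ Nat.findGreatest_le _

lemma getElem?_aux {k n j i : ℕ} (h : j ≤ i) :
    (preferMaxAux k n i)[i - j]? = some (preferMax k n j) := by
  induction i with
  | zero =>
    have : j = 0 := Nat.le_zero.mp h
    subst this
    rfl
  | succ i ih =>
    rcases Nat.lt_or_ge j (i + 1) with hj | hj
    · have hj' : j ≤ i := Nat.lt_succ_iff.mp hj
      rw [aux_succ]
      have : i + 1 - j = (i - j) + 1 := by omega
      rw [this, List.getElem?_cons_succ]
      exact ih hj'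
    · have : j = i + 1 := le_antisymm h hj
      subst this
      simp [aux_succ, preferMax_succ]

lemma index_inj {k n i j j' : ℕ} (hnd : (preferMaxAux k n i).Nodup)
    (hj : j ≤ i) (hj' : j' ≤ i) (h : preferMax k n j = preferMax k n j') : j = j' := by
  have h1 := getElem?_aux (k := k) (n := n) hj
  have h2 := getElem?_aux (k := k) (n := n) hj'
  rw [h] at h1
  have hlen : i - j < (preferMaxAux k n i).length := by
    rw [length_aux]; omega
  have := (List.getElem?_inj hlen hnd).mp (h1.trans h2.symm)
  omega

/-- If the construction would be "stuck" at a window all of whose proper suffix letters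
include `k-1`, we get a contradiction by pigeonhole; hence some symbol is available. -/
lemma not_stuck (hk : 1 < k) (hn : 1 ≤ n) {i : ℕ}
    (hnd : (preferMaxAux k n i).Nodup)
    (hx : (k - 1) ∈ (preferMax k n i).tail) :
    ∃ τ ≤ k - 1, ((preferMax k n i).tail ++ [τ]) ∉ preferMaxAux k n i := by
  by_contra hstuck
  push_neg at hstuck
  set x := (preferMax k n i).tail with hxdef
  -- for every τ ≤ k-1 there is an index j ≤ i with w_j = x ++ [τ]
  have hex : ∀ τ, τ ≤ k - 1 → ∃ j ≤ i, preferMax k n j = x ++ [τ] := by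
    intro τ hτ
    exact mem_aux.mp (hstuck τ hτ)
  choose J hJle hJeq using hex
  have hk1 : k - 1 ≠ 0 := by omega
  have hxlen : x.length = n - 1 := by
    rw [hxdef, List.length_tail, length_preferMax hn]
  -- each J τ is positive
  have hJpos : ∀ τ (hτ : τ ≤ k - 1), 1 ≤ J τ hτ := by
    intro τ hτ
    by_contra h
    have h0 : J τ hτ = 0 := by omega
    have := hJeq τ hτ
    rw [h0, preferMax_zero] at this
    have hxr : x = List.replicate (n - 1) 0 := by
      have hl : (List.replicate (n - 1) 0 : List ℕ).length = x.length := by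
        simp [hxlen]
      exact ((List.append_inj this hl).1).symm
    rw [hxr] at hx
    exact hk1 (List.eq_of_mem_replicate hx)
  -- index map: 0 ↦ i, τ+1 ↦ J τ - 1
  set idx : ℕ → ℕ := fun t => if h : t = 0 then i else
    if h2 : t - 1 ≤ k - 1 then J (t - 1) h2 - 1 else 0 with hidx
  -- every slot's window is (head) :: x
  have hwin : ∀ t ≤ k, ∃ σ ≤ k - 1, idx t ≤ i ∧ preferMax k n (idx t) = σ :: x ∧
      (preferMax k n (idx t)).headI = σ := by
    intro t ht
    rcases Nat.eq_zero_or_pos t with rfl | htpos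
    · refine ⟨(preferMax k n i).headI, ?_, ?_, ?_, rfl⟩
      · exact letters_le k n i (headI_mem hn k i)
      · simp [hidx]
      · simp only [hidx, dif_pos rfl]
        exact (cons_headI_tail hn k i).symm
    · have ht1 : t - 1 ≤ k - 1 := by omega
      have hJ1 := hJpos (t - 1) ht1
      have hidxt : idx t = J (t - 1) ht1 - 1 := by
        simp only [hidx]
        rw [dif_neg (by omega), dif_pos ht1]
      obtain ⟨m, hm⟩ : ∃ m, J (t - 1) ht1 = m + 1 := ⟨J (t - 1) ht1 - 1, by omega⟩
      have heq := hJeq (t - 1) ht1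
      rw [hm, preferMax_succ] at heq
      have htail : (preferMax k n m).tail = x := by
        have hl : (preferMax k n m).tail.length = x.length := by
          rw [List.length_tail, length_preferMax hn, hxlen]
        exact (List.append_inj heq hl).1
      have hidxm : idx t = m := by omega
      refine ⟨(preferMax k n m).headI, ?_, ?_, ?_, by rw [hidxm]⟩
      · exact letters_le k n m (headI_mem hn k m)
      · have := hJle (t - 1) ht1
        omega
      · rw [hidxm, ← htail]
        exact (cons_headI_tail hn k m).symm
  -- idx is injective on {0,…,k}
  have hidx_inj : ∀ a ≤ k, ∀ b ≤ k, idx a = idx b → a = b := by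
    intro a ha b hb hab
    rcases Nat.eq_zero_or_pos a with rfl | hapos <;> rcases Nat.eq_zero_or_pos b with rfl | hbpos
    · rfl
    · exfalso
      have hb1 : b - 1 ≤ k - 1 := by omega
      have h1 := hJpos (b - 1) hb1
      have h2 := hJle (b - 1) hb1
      have : idx 0 = i := by simp [hidx]
      have hb' : idx b = J (b - 1) hb1 - 1 := by
        simp only [hidx]; rw [dif_neg (by omega), dif_pos hb1]
      omega
    · exfalso
      have ha1 : a - 1 ≤ k - 1 := by omega
      have h1 := hJpos (a - 1) ha1
      have h2 := hJle (a - 1) ha1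
      have : idx 0 = i := by simp [hidx]
      have ha' : idx a = J (a - 1) ha1 - 1 := by
        simp only [hidx]; rw [dif_neg (by omega), dif_pos ha1]
      omega
    · have ha1 : a - 1 ≤ k - 1 := by omega
      have hb1 : b - 1 ≤ k - 1 := by omega
      have ha' : idx a = J (a - 1) ha1 - 1 := by
        simp only [hidx]; rw [dif_neg (by omega), dif_pos ha1]
      have hb' : idx b = J (b - 1) hb1 - 1 := by
        simp only [hidx]; rw [dif_neg (by omega), dif_pos hb1]
      have hJa := hJpos (a - 1) ha1
      have hJb := hJpos (b - 1) hb1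
      have hJeq' : J (a - 1) ha1 = J (b - 1) hb1 := by omega
      have := hJeq (a - 1) ha1
      rw [hJeq', hJeq (b - 1) hb1] at this
      have := List.append_inj' this rfl
      simp at this
      omega
  -- pigeonhole: map each slot t ∈ {0,…,k} to the head of its window, which lies in {0,…,k-1}
  have hmaps : ∀ t ∈ Finset.range (k + 1), (preferMax k n (idx t)).headI ∈ Finset.range k := by
    intro t ht
    obtain ⟨σ, hσ, _, _, hhead⟩ := hwin t (Nat.lt_succ_iff.mp (Finset.mem_range.mp ht))
    rw [hhead]
    exact Finset.mem_range.mpr (by omega)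
  have hcard : (Finset.range k).card < (Finset.range (k + 1)).card := by
    simp
  obtain ⟨a, ha, b, hb, hab, hfab⟩ :=
    Finset.exists_ne_map_eq_of_card_lt_of_maps_to hcard hmaps
  have ha' : a ≤ k := Nat.lt_succ_iff.mp (Finset.mem_range.mp ha)
  have hb' : b ≤ k := Nat.lt_succ_iff.mp (Finset.mem_range.mp hb)
  obtain ⟨σa, _, haidx, haeq, hahead⟩ := hwin a ha'
  obtain ⟨σb, _, hbidx, hbeq, hbhead⟩ := hwin b hb'
  have : preferMax k n (idx a) = preferMax k n (idx b) := by
    rw [haeq, hbeq, ← hahead, ← hbhead, hfab]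
  exact hab (hidx_inj a ha' b hb' (index_inj hnd haidx hbidx this))

/-- As long as every window so far contains `k-1`, the list of windows has no duplicates. -/
lemma nodup_aux (hk : 1 < k) (hn : 1 ≤ n) :
    ∀ i, (∀ j ≤ i, (k - 1) ∈ preferMax k n j) → (preferMaxAux k n i).Nodup := by
  intro i
  induction i with
  | zero => intro _; exact List.nodup_singleton _
  | succ i ih =>
    intro hall
    have hnd : (preferMaxAux k n i).Nodup :=
      ih fun j hj => hall j (Nat.le_succ_of_le hj)
    rw [aux_succ]
    refine List.Nodup.cons ?_ hnd
    rw [← preferMax_succ]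
    by_cases hx : (k - 1) ∈ (preferMax k n i).tail
    · obtain ⟨τ, hτ, hP⟩ := not_stuck hk hn hnd hx
      have := Nat.findGreatest_spec (P := fun τ =>
        ((preferMax k n i).tail ++ [τ]) ∉ preferMaxAux k n i) hτ hP
      rw [preferMax_succ]
      exact this
    · -- τ = 0 is available since x ++ [0] contains no k-1
      have hP0 : ((preferMax k n i).tail ++ [0]) ∉ preferMaxAux k n i := by
        intro hmem
        obtain ⟨j, hj, hjeq⟩ := mem_aux.mp hmem
        have hkin := hall j (Nat.le_succ_of_le hj)
        rw [hjeq] at hkin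
        rcases List.mem_append.mp hkin with h | h
        · exact hx h
        · have := List.mem_singleton.mp h
          omega
      have := Nat.findGreatest_spec (P := fun τ =>
        ((preferMax k n i).tail ++ [τ]) ∉ preferMaxAux k n i) (Nat.zero_le (k - 1)) hP0
      rw [preferMax_succ]
      exact this

end PreferMaxProof

/-- Let `i₀ = min { i : the symbol k-1 does not occur in wᵢ }` for the
`(k,n)`-prefer-max cycle with `k > 1`, `n ≥ 1`.  Then `w_{i₀-1} = (k-1)0^{n-1}`. -/
theorem preferMax_window_before_first_layer_end (k n i₀ : ℕ) (hk : 1 < k) (hn : 1 ≤ n)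
    (hi₀ : (k - 1) ∉ preferMax k n i₀)
    (hmin : ∀ j < i₀, (k - 1) ∈ preferMax k n j) :
    preferMax k n (i₀ - 1) = (k - 1) :: List.replicate (n - 1) 0 := by
  open PreferMaxProof in
  -- i₀ ≥ 1 since w₀ contains k-1
  obtain ⟨m, rfl⟩ : ∃ m, i₀ = m + 1 := by
    rcases Nat.eq_zero_or_pos i₀ with h0 | hpos
    · exfalso
      apply hi₀
      rw [h0, preferMax_zero]
      exact List.mem_append_right _ (List.mem_singleton.mpr rfl)
    · exact ⟨i₀ - 1, by omega⟩
  simp only [Nat.add_sub_cancel]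
  set x := (preferMax k n m).tail with hxdef
  have hsucc := preferMax_succ k n m
  set τstar := Nat.findGreatest (fun τ => ((preferMax k n m).tail ++ [τ]) ∉ preferMaxAux k n m)
    (k - 1) with hτdef
  -- k-1 not in x, and τstar ≠ k-1
  have hxfree : (k - 1) ∉ x := fun h => hi₀ (hsucc ▸ List.mem_append_left _ h)
  have hτne : τstar ≠ k - 1 := by
    intro h
    apply hi₀
    rw [hsucc]
    exact List.mem_append_right _ (List.mem_singleton.mpr h.symm)
  have hxlen : x.length = n - 1 := by
    rw [hxdef, List.length_tail, length_preferMax hn]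
  -- x ++ [k-1] must already occur among w₀,…,w_m
  have hseen : (x ++ [k - 1]) ∈ preferMaxAux k n m := by
    by_contra hmem
    have h1 : k - 1 ≤ τstar := Nat.le_findGreatest (le_refl _) hmem
    have h2 : τstar ≤ k - 1 := Nat.findGreatest_le _
    exact hτne (le_antisymm h2 h1)
  obtain ⟨j, hj, hjeq⟩ := mem_aux.mp hseen
  have hnd : (preferMaxAux k n m).Nodup :=
    nodup_aux hk hn m fun j hj => hmin j (by omega)
  -- w_m = (k-1) :: x
  have hwm : preferMax k n m = (k - 1) :: x := by
    have hkin := hmin m (by omega)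
    conv_lhs at hkin => rw [← cons_headI_tail hn k m]
    rcases List.mem_cons.mp hkin with h | h
    · rw [← cons_headI_tail hn k m, ← h]
    · exact absurd h hxfree
  rcases Nat.eq_zero_or_pos j with rfl | hjpos
  · -- j = 0 : x = 0^{n-1}
    rw [preferMax_zero] at hjeq
    have hl : (List.replicate (n - 1) 0 : List ℕ).length = x.length := by
      simp [hxlen]
    have hxr : List.replicate (n - 1) 0 = x := (List.append_inj hjeq hl).1
    rw [hwm, ← hxr]
  · -- j ≥ 1 : contradiction with Nodup
    exfalso
    obtain ⟨s, rfl⟩ : ∃ s, j = s + 1 := ⟨j - 1, by omega⟩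
    have hs := preferMax_succ k n s
    rw [hjeq] at hs
    have htail : x = (preferMax k n s).tail := by
      have hl : x.length = (preferMax k n s).tail.length := by
        rw [hxlen, List.length_tail, length_preferMax hn]
      exact (List.append_inj hs hl).1
    have hws : preferMax k n s = (k - 1) :: x := by
      have hkin := hmin s (by omega)
      conv_lhs at hkin => rw [← cons_headI_tail hn k s]
      rcases List.mem_cons.mp hkin with h | h
      · rw [← cons_headI_tail hn k s, ← h, htail]
      · rw [← htail] at h
        exact absurd h hxfree
    have : s = m := index_inj hnd (by omega) (le_refl m) (hws.trans hwm.symm)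
    omega
end

section
/- Let (w_i)_{i=0}^{k^n-1} be the (k,n)-prefer-max cycle with k ≥ 2, n ≥ 1, and let i_0 = min{ i : the symbol k-1 does not occur in w_i }. Then w_{i_0} = 0^{n-1}(k-2), i.e., the first window not containing k-1 consists of n-1 zeros followed by the symbol k-2. -/
private lemma pm_zero (k n : ℕ) : preferMax k n 0 = List.replicate (n-1) 0 ++ [k-1] := rfl

private lemma aux_succ (k n i : ℕ) :
    preferMaxAux k n (i+1) =
      ((preferMax k n i).tail ++
        [Nat.findGreatest (fun τ => ((preferMax k n i).tail ++ [τ]) ∉ preferMaxAux k n i) (k-1)])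
        :: preferMaxAux k n i := rfl

private lemma pm_succ (k n i : ℕ) :
    preferMax k n (i+1) =
      (preferMax k n i).tail ++
        [Nat.findGreatest (fun τ => ((preferMax k n i).tail ++ [τ]) ∉ preferMaxAux k n i) (k-1)] := rfl

private lemma aux_eq_map (k n i : ℕ) :
    preferMaxAux k n i = ((List.range (i+1)).reverse).map (preferMax k n) := by
  induction i with
  | zero =>
    rw [List.range_succ, List.range_zero]
    simp [preferMaxAux, pm_zero]
  | succ i ih =>
    rw [aux_succ, List.range_succ, List.reverse_append, ← pm_succ]
    simp [ih]

private lemma mem_aux_iff (k n i : ℕ) (w : List ℕ) :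
    w ∈ preferMaxAux k n i ↔ ∃ m ≤ i, preferMax k n m = w := by
  rw [aux_eq_map]
  simp [List.mem_map, Nat.lt_succ_iff]

private lemma pm_mem_aux (k n i m : ℕ) (h : m ≤ i) : preferMax k n m ∈ preferMaxAux k n i :=
  (mem_aux_iff k n i _).2 ⟨m, h, rfl⟩

private lemma pm_inj (k n i : ℕ) (hnd : (preferMaxAux k n i).Nodup) {a b : ℕ}
    (ha : a ≤ i) (hb : b ≤ i) (h : preferMax k n a = preferMax k n b) : a = b := by
  rw [aux_eq_map] at hnd
  exact List.inj_on_of_nodup_map hnd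
    (by simp [Nat.lt_succ_iff, ha]) (by simp [Nat.lt_succ_iff, hb]) h

private lemma pm_length (k n : ℕ) (hn : 1 ≤ n) (i : ℕ) : (preferMax k n i).length = n := by
  induction i with
  | zero => simp [pm_zero]; omega
  | succ i ih => rw [pm_succ]; simp [List.length_tail, ih]; omega

private lemma pm_ne_nil (k n : ℕ) (hn : 1 ≤ n) (i : ℕ) : preferMax k n i ≠ [] := by
  intro h
  have := pm_length k n hn i
  rw [h] at this
  simp at this
  omega

private lemma pm_lt (k n : ℕ) (hk : 1 ≤ k) (i : ℕ) : ∀ c ∈ preferMax k n i, c < k := by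
  induction i with
  | zero =>
    intro c hc
    rw [pm_zero] at hc
    rcases List.mem_append.1 hc with h | h
    · have := List.eq_of_mem_replicate h; omega
    · simp at h; omega
  | succ i ih =>
    intro c hc
    rw [pm_succ] at hc
    rcases List.mem_append.1 hc with h | h
    · exact ih c (List.mem_of_mem_tail h)
    · simp at h
      have := Nat.findGreatest_le (P := fun τ => ((preferMax k n i).tail ++ [τ]) ∉ preferMaxAux k n i) (k-1)
      omega

/-- decomposition of the predecessor window -/
private lemma step_decomp (k n : ℕ) (hn : 1 ≤ n) {m t : ℕ} {z : List ℕ}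
    (hz : z.length = n - 1) (h : preferMax k n (m+1) = z ++ [t]) :
    preferMax k n m = (preferMax k n m).headI :: z := by
  rw [pm_succ] at h
  have hlen : (preferMax k n m).tail.length = z.length := by
    rw [List.length_tail, pm_length k n hn, hz]
  obtain ⟨h1, _⟩ := List.append_inj h hlen
  obtain ⟨a, l, hal⟩ := List.exists_cons_of_ne_nil (pm_ne_nil k n hn m)
  rw [hal] at h1 ⊢
  simp only [List.headI, List.tail_cons] at *
  rw [h1]

private lemma pm_nodup (k n : ℕ) (hk : 2 ≤ k) (hn : 1 ≤ n) :
    ∀ i, (∀ j < i, (k-1) ∈ preferMax k n j) → (preferMaxAux k n i).Nodup := by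
  intro i
  induction i with
  | zero => intro _; simp [preferMaxAux]
  | succ i ih =>
    intro h
    have hprev : (preferMaxAux k n i).Nodup := ih (fun j hj => h j (by omega))
    rw [aux_succ]
    refine List.nodup_cons.mpr ⟨?_, hprev⟩
    intro hmem
    set z := (preferMax k n i).tail with hzdef
    set L := preferMaxAux k n i with hL
    set τ := Nat.findGreatest (fun τ => (z ++ [τ]) ∉ L) (k-1) with hτ
    -- the written window is a duplicate, so the predicate fails at τ
    have hnPτ : ¬ (z ++ [τ] ∉ L) := fun hc => hc hmem
    have hτ0 : τ = 0 := by
      by_contra h0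
      have hne : Nat.findGreatest (fun τ => (z ++ [τ]) ∉ L) (k-1) ≠ 0 := fun hc => h0 (hτ.trans hc)
      rw [Ne, Nat.findGreatest_eq_zero_iff] at hne
      push_neg at hne
      obtain ⟨t, ht0, htk, htP⟩ := hne
      exact hnPτ (Nat.findGreatest_spec (P := fun τ => (z ++ [τ]) ∉ L) htk htP)
    have hall : ∀ t < k, z ++ [t] ∈ L := by
      intro t ht
      rcases Nat.eq_zero_or_pos t with h0 | h0
      · rw [h0]; rw [hτ0] at hnPτ; exact not_not.1 hnPτ
      · have := Nat.findGreatest_eq_zero_iff.1 (hτ.symm.trans hτ0) h0 (by omega)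
        exact not_not.1 this
    have hzl : z.length = n - 1 := by
      rw [hzdef, List.length_tail, pm_length k n hn]
    -- z contains k-1
    have hz1 : (k-1) ∈ z := by
      obtain ⟨m, hm, hwm⟩ := (mem_aux_iff k n i _).1 (hall 0 (by omega))
      have hk1 : (k-1) ∈ z ++ [0] := by rw [← hwm]; exact h m (by omega)
      rcases List.mem_append.1 hk1 with h' | h'
      · exact h'
      · simp at h'; omega
    -- choose indices for all extensions of z
    have hidx : ∀ t : Fin k, ∃ m, m ≤ i ∧ preferMax k n m = z ++ [(t : ℕ)] := by
      intro t
      obtain ⟨m, hm, hwm⟩ := (mem_aux_iff k n i _).1 (hall t t.isLt)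
      exact ⟨m, hm, hwm⟩
    choose m hm₁ hm₂ using hidx
    have hm0 : ∀ t, m t ≠ 0 := by
      intro t hc
      have := hm₂ t
      rw [hc, pm_zero] at this
      obtain ⟨hrep, _⟩ := List.append_inj this (by simp [hzl])
      rw [← hrep] at hz1
      have := List.eq_of_mem_replicate hz1
      omega
    have hpred : ∀ t : Fin k, preferMax k n (m t - 1) = (preferMax k n (m t - 1)).headI :: z := by
      intro t
      have : m t - 1 + 1 = m t := Nat.succ_pred_eq_of_ne_zero (hm0 t)
      exact step_decomp k n hn hzl (by rw [this]; exact hm₂ t)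
    have hheadlt : ∀ t : Fin k, (preferMax k n (m t - 1)).headI < k := by
      intro t
      apply pm_lt k n (by omega) (m t - 1)
      rw [hpred t]; exact List.mem_cons_self
    set f : Fin k → Fin k := fun t => ⟨(preferMax k n (m t - 1)).headI, hheadlt t⟩ with hf
    have hfinj : Function.Injective f := by
      intro t t' hft
      have heq : preferMax k n (m t - 1) = preferMax k n (m t' - 1) := by
        rw [hpred t, hpred t']
        have : ((f t : Fin k) : ℕ) = ((f t' : Fin k) : ℕ) := by rw [hft]
        simp [hf] at this
        rw [this]
      have hmeq : m t - 1 = m t' - 1 :=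
        pm_inj k n i hprev (by have := hm₁ t; omega) (by have := hm₁ t'; omega) heq
      have : m t = m t' := by have := hm0 t; have := hm0 t'; omega
      have : z ++ [(t : ℕ)] = z ++ [(t' : ℕ)] := by rw [← hm₂ t, ← hm₂ t', this]
      have : (t : ℕ) = (t' : ℕ) := by simpa using this
      exact Fin.ext this
    have hfsurj : Function.Surjective f := Finite.injective_iff_surjective.1 hfinj
    -- the current window w_i is itself of the form c :: z
    have hwi : preferMax k n i = (preferMax k n i).headI :: z := by
      obtain ⟨a, l, hal⟩ := List.exists_cons_of_ne_nil (pm_ne_nil k n hn i)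
      rw [hzdef, hal]
      simp
    have hwihead : (preferMax k n i).headI < k := by
      apply pm_lt k n (by omega) i
      rw [hwi]; exact List.mem_cons_self
    obtain ⟨t, ht⟩ := hfsurj ⟨(preferMax k n i).headI, hwihead⟩
    have htv : (preferMax k n (m t - 1)).headI = (preferMax k n i).headI := by
      have : ((f t : Fin k) : ℕ) = (preferMax k n i).headI := by rw [ht]
      simpa [hf] using this
    have heq : preferMax k n (m t - 1) = preferMax k n i := by
      rw [hpred t, hwi, htv]
    have : m t - 1 = i := pm_inj k n i hprev (by have := hm₁ t; omega) le_rfl heq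
    have := hm₁ t; have := hm0 t
    omega

/-- Let `i₀ = min { i : the symbol k-1 does not occur in wᵢ }` for the
`(k,n)`-prefer-max cycle with `k ≥ 2`, `n ≥ 1`.  Then `w_{i₀} = 0^{n-1}(k-2)`. -/
theorem preferMax_first_window_without_max (k n i₀ : ℕ) (hk : 2 ≤ k) (hn : 1 ≤ n)
    (hi₀ : (k - 1) ∉ preferMax k n i₀)
    (hmin : ∀ j < i₀, (k - 1) ∈ preferMax k n j) :
    preferMax k n i₀ = List.replicate (n - 1) 0 ++ [k - 2] := by
  -- i₀ ≠ 0
  obtain ⟨j, rfl⟩ : ∃ j, i₀ = j + 1 := by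
    have h0 : i₀ ≠ 0 := by
      intro hc
      apply hi₀
      rw [hc, pm_zero]
      exact List.mem_append.2 (Or.inr (by simp))
    exact ⟨i₀ - 1, by omega⟩
  set z := (preferMax k n j).tail with hzdef
  set L := preferMaxAux k n j with hL
  set τ := Nat.findGreatest (fun τ => (z ++ [τ]) ∉ L) (k-1) with hτ
  have hstep : preferMax k n (j+1) = z ++ [τ] := pm_succ k n j
  have hzl : z.length = n - 1 := by
    rw [hzdef, List.length_tail, pm_length k n hn]
  have hnotz : (k-1) ∉ z := by
    intro hc
    exact hi₀ (by rw [hstep]; exact List.mem_append.2 (Or.inl hc))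
  have hτne : τ ≠ k - 1 := by
    intro hc
    apply hi₀
    rw [hstep, hc]
    exact List.mem_append.2 (Or.inr (by simp))
  -- z ++ [k-1] has already appeared
  have hzk1 : z ++ [k-1] ∈ L := by
    by_contra hc
    have : k - 1 ≤ τ := Nat.le_findGreatest le_rfl hc
    have : τ ≤ k - 1 := Nat.findGreatest_le _
    omega
  obtain ⟨m, hm, hwm⟩ := (mem_aux_iff k n j _).1 hzk1
  -- first step: z = 0^{n-1}
  have hzrep : z = List.replicate (n-1) 0 := by
    rcases Nat.eq_zero_or_pos m with h0 | h0
    · rw [h0, pm_zero] at hwm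
      exact (List.append_inj hwm (by simp [hzl])).1.symm
    · exfalso
      obtain ⟨m', rfl⟩ : ∃ m', m = m' + 1 := ⟨m - 1, by omega⟩
      have hdm : preferMax k n m' = (preferMax k n m').headI :: z :=
        step_decomp k n hn hzl hwm
      have hm'k : (k-1) ∈ preferMax k n m' := hmin m' (by omega)
      have hm'head : (preferMax k n m').headI = k - 1 := by
        rw [hdm] at hm'k
        rcases List.mem_cons.1 hm'k with h' | h'
        · omega
        · exact absurd h' hnotz
      have hjk : (k-1) ∈ preferMax k n j := hmin j (by omega)
      have hjdec : preferMax k n j = (preferMax k n j).headI :: z := by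
        obtain ⟨a, l, hal⟩ := List.exists_cons_of_ne_nil (pm_ne_nil k n hn j)
        rw [hzdef, hal]
        simp
      have hjhead : (preferMax k n j).headI = k - 1 := by
        rw [hjdec] at hjk
        rcases List.mem_cons.1 hjk with h' | h'
        · omega
        · exact absurd h' hnotz
      have heq : preferMax k n m' = preferMax k n j := by
        rw [hdm, hjdec, hm'head, hjhead]
      have hnd : (preferMaxAux k n j).Nodup :=
        pm_nodup k n hk hn j (fun j' hj' => hmin j' (by omega))
      have := pm_inj k n j hnd (by omega) le_rfl heq
      omega
  -- second step: τ = k - 2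
  have hP2 : (z ++ [k-2]) ∉ L := by
    intro hc
    obtain ⟨m2, hm2, hwm2⟩ := (mem_aux_iff k n j _).1 hc
    have : (k-1) ∈ z ++ [k-2] := by rw [← hwm2]; exact hmin m2 (by omega)
    rcases List.mem_append.1 this with h' | h'
    · exact hnotz h'
    · simp at h'; omega
  have hτ2 : τ = k - 2 := by
    have h1 : k - 2 ≤ τ := Nat.le_findGreatest (by omega) hP2
    have h2 : τ ≤ k - 1 := Nat.findGreatest_le _
    omega
  rw [hstep, hzrep, hτ2]
end

section
/- Let (w_i)_{i=0}^{k^n-1} be the (k,n)-prefer-max cycle with k > 1, n ≥ 1, and let i_0 = min{ i : the symbol k-1 does not occur in w_i }. Then every word w ∈ [k]^n that contains the symbol k-1 appears among the windows before index i_0; that is, there exists j < i_0 with w_j = w. -/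
namespace PMproof

/-- `w` is covered: it appears as a window strictly before index `i₀`. -/
def Cov (k n i₀ : ℕ) (w : List ℕ) : Prop := ∃ j, j < i₀ ∧ preferMax k n j = w

variable {k n i₀ : ℕ}

lemma pm_zero (k n : ℕ) : preferMax k n 0 = List.replicate (n - 1) 0 ++ [k - 1] := rfl

lemma aux_succ (k n j : ℕ) :
    preferMaxAux k n (j + 1) = preferMax k n (j + 1) :: preferMaxAux k n j := rfl

lemma pm_succ (k n j : ℕ) :
    preferMax k n (j + 1) =
      (preferMax k n j).tail ++
        [Nat.findGreatest
          (fun τ => ((preferMax k n j).tail ++ [τ]) ∉ preferMaxAux k n j) (k - 1)] := rfl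

lemma headI_cons_tail {l : List ℕ} (h : l ≠ []) : l.headI :: l.tail = l := by
  cases l with
  | nil => exact absurd rfl h
  | cons a t => rfl

lemma headI_mem {l : List ℕ} (h : l ≠ []) : l.headI ∈ l := by
  cases l with
  | nil => exact absurd rfl h
  | cons a t => exact List.mem_cons_self

lemma concat_inj {x y : List ℕ} {a b : ℕ} (h : x ++ [a] = y ++ [b]) : x = y ∧ a = b := by
  have h2 := List.append_inj' h rfl
  refine ⟨h2.1, ?_⟩
  have h3 := h2.2
  simpa using h3

lemma mem_aux {j : ℕ} {w : List ℕ} :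
    w ∈ preferMaxAux k n j ↔ ∃ l, l ≤ j ∧ preferMax k n l = w := by
  induction j with
  | zero =>
    constructor
    · intro h
      have h' : w = List.replicate (n - 1) 0 ++ [k - 1] := by
        simpa [preferMaxAux] using h
      exact ⟨0, le_rfl, h'.symm⟩
    · rintro ⟨l, hl, h⟩
      have hl0 : l = 0 := Nat.le_zero.1 hl
      subst hl0
      rw [← h]
      simp [preferMaxAux, preferMax]
  | succ j ih =>
    rw [aux_succ, List.mem_cons, ih]
    constructor
    · rintro (h | ⟨l, hl, h⟩)
      · exact ⟨j + 1, le_rfl, h.symm⟩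
      · exact ⟨l, Nat.le_succ_of_le hl, h⟩
    · rintro ⟨l, hl, h⟩
      rcases Nat.lt_or_ge l (j + 1) with h' | h'
      · exact Or.inr ⟨l, by omega, h⟩
      · have : l = j + 1 := by omega
        subst this
        exact Or.inl h.symm

lemma pm_length (hn : 1 ≤ n) (j : ℕ) : (preferMax k n j).length = n := by
  induction j with
  | zero =>
    rw [pm_zero]
    simp
    omega
  | succ j ih =>
    rw [pm_succ]
    simp [List.length_tail, ih]
    omega

lemma pm_ne_nil (hn : 1 ≤ n) (j : ℕ) : preferMax k n j ≠ [] := by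
  intro h
  have := pm_length (k := k) hn j
  rw [h] at this
  simp at this
  omega

lemma pm_lt (hk : 1 < k) (j : ℕ) : ∀ c ∈ preferMax k n j, c < k := by
  induction j with
  | zero =>
    intro c hc
    rw [pm_zero] at hc
    rcases List.mem_append.1 hc with h | h
    · have := List.eq_of_mem_replicate h
      omega
    · have : c = k - 1 := by simpa using h
      omega
  | succ j ih =>
    intro c hc
    rw [pm_succ] at hc
    rcases List.mem_append.1 hc with h | h
    · exact ih c (List.mem_of_mem_tail h)
    · have hc' : c = Nat.findGreatest
          (fun τ => ((preferMax k n j).tail ++ [τ]) ∉ preferMaxAux k n j) (k - 1) := by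
        simpa using h
      have := Nat.findGreatest_le
        (P := fun τ => ((preferMax k n j).tail ++ [τ]) ∉ preferMaxAux k n j) (k - 1)
      omega

lemma cov_of_mem_aux {j : ℕ} (hj : j < i₀) {w : List ℕ} (h : w ∈ preferMaxAux k n j) :
    Cov k n i₀ w := by
  obtain ⟨l, hl, h⟩ := mem_aux.1 h
  exact ⟨l, by omega, h⟩

lemma dropLast_pm0 : (preferMax k n 0).dropLast = List.replicate (n - 1) 0 := by
  rw [pm_zero]
  exact List.dropLast_concat

lemma tail_eq_dropLast_succ (k n j : ℕ) :
    (preferMax k n (j + 1)).dropLast = (preferMax k n j).tail := by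
  rw [pm_succ]
  exact List.dropLast_concat

/-- Generic index-shift counting identity. -/
lemma count_shift (φ : ℕ → Prop) [DecidablePred φ] (N : ℕ) :
    ((Finset.range N).filter (fun j => φ (j + 1))).card + (if φ 0 then 1 else 0) =
    ((Finset.range N).filter φ).card + (if φ N then 1 else 0) := by
  induction N with
  | zero => simp
  | succ N ih =>
    have h1 : N ∉ (Finset.range N).filter (fun j => φ (j + 1)) := by simp
    have h2 : N ∉ (Finset.range N).filter φ := by simp
    rw [Finset.range_add_one, Finset.filter_insert, Finset.filter_insert]
    by_cases hφ0 : φ 0 <;> by_cases hφ1 : φ (N + 1) <;> by_cases hφ2 : φ N <;>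
      simp only [hφ0, hφ1, hφ2, if_true, if_false, Finset.card_insert_of_notMem h1,
        Finset.card_insert_of_notMem h2] at ih ⊢ <;> omega

/-- The master balance identity: the number of indices `j < N` whose window has
suffix-`(n-1)` equal to `y` differs from the number whose prefix-`(n-1)` is `y`
exactly by the boundary terms. -/
lemma star (k n : ℕ) (y : List ℕ) (N : ℕ) :
    ((Finset.range N).filter (fun j => (preferMax k n j).tail = y)).card
      + (if (preferMax k n 0).dropLast = y then 1 else 0) =
    ((Finset.range N).filter (fun j => (preferMax k n j).dropLast = y)).card
      + (if (preferMax k n N).dropLast = y then 1 else 0) := by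
  have h := count_shift (fun j => (preferMax k n j).dropLast = y) N
  have he : ((Finset.range N).filter (fun j => (preferMax k n (j + 1)).dropLast = y)) =
      ((Finset.range N).filter (fun j => (preferMax k n j).tail = y)) := by
    apply Finset.filter_congr
    intro x _
    rw [tail_eq_dropLast_succ]
  rw [he] at h
  exact h

lemma fresh (hk : 1 < k) (hn : 1 ≤ n)
    (hmin : ∀ j < i₀, (k - 1) ∈ preferMax k n j) :
    ∀ i, i + 1 ≤ i₀ → preferMax k n (i + 1) ∉ preferMaxAux k n i := by
  intro i
  induction i using Nat.strong_induction_on with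
  | _ i IH =>
  intro hi hmem
  have hdist : ∀ a b, a < b → b ≤ i → preferMax k n a ≠ preferMax k n b := by
    intro a b hab hbi heq
    obtain ⟨b', rfl⟩ : ∃ b', b = b' + 1 := ⟨b - 1, by omega⟩
    exact IH b' (by omega) (by omega) (mem_aux.2 ⟨a, by omega, heq⟩)
  set x := (preferMax k n i).tail with hxdef
  have hall : ∀ τ, τ ≤ k - 1 → x ++ [τ] ∈ preferMaxAux k n i := by
    by_contra hno
    push_neg at hno
    obtain ⟨τ, hτ, hfresh⟩ := hno
    have hspec := Nat.findGreatest_spec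
      (P := fun τ => ((preferMax k n i).tail ++ [τ]) ∉ preferMaxAux k n i) hτ hfresh
    rw [pm_succ] at hmem
    exact hspec hmem
  -- k-1 ∈ x
  have hx : (k - 1) ∈ x := by
    obtain ⟨l, hl, hWl⟩ := mem_aux.1 (hall 0 (by omega))
    have hkm : (k - 1) ∈ preferMax k n l := hmin l (by omega)
    rw [hWl] at hkm
    rcases List.mem_append.1 hkm with h | h
    · exact h
    · have : k - 1 = 0 := by simpa using h
      omega
  set N := i + 1 with hN
  set Jt := (Finset.range N).filter (fun j => (preferMax k n j).tail = x) with hJt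
  set Ji := (Finset.range N).filter (fun j => (preferMax k n j).dropLast = x) with hJi
  have hJiCard : k ≤ Ji.card := by
    have hsub : Finset.range k ⊆ Ji.image (fun j => (preferMax k n j).getLastD 0) := by
      intro σ hσ
      have hσk : σ ≤ k - 1 := by
        have := Finset.mem_range.1 hσ
        omega
      obtain ⟨l, hl, hWl⟩ := mem_aux.1 (hall σ hσk)
      refine Finset.mem_image.2 ⟨l, ?_, ?_⟩
      · refine Finset.mem_filter.2 ⟨Finset.mem_range.2 (by omega), ?_⟩
        rw [hWl]
        exact List.dropLast_concat
      · rw [hWl]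
        exact List.getLastD_concat
    calc k = (Finset.range k).card := (Finset.card_range k).symm
      _ ≤ (Ji.image (fun j => (preferMax k n j).getLastD 0)).card := Finset.card_le_card hsub
      _ ≤ Ji.card := Finset.card_image_le
  have hstar := star k n x N
  rw [← hJt, ← hJi] at hstar
  have hind0 : ¬ ((preferMax k n 0).dropLast = x) := by
    rw [dropLast_pm0]
    intro h
    rw [← h] at hx
    have := List.eq_of_mem_replicate hx
    omega
  have hindN : (preferMax k n N).dropLast = x := by
    rw [hN, tail_eq_dropLast_succ]
  rw [if_neg hind0, if_pos hindN] at hstar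
  have hJtCard : k + 1 ≤ Jt.card := by omega
  have hinj : Set.InjOn (fun j => (preferMax k n j).headI) Jt := by
    intro a ha b hb hab
    have ha' := Finset.mem_filter.1 ha
    have hb' := Finset.mem_filter.1 hb
    have hWa : preferMax k n a = (preferMax k n a).headI :: x := by
      conv_lhs => rw [← headI_cons_tail (pm_ne_nil hn a)]
      rw [ha'.2]
    have hWb : preferMax k n b = (preferMax k n b).headI :: x := by
      conv_lhs => rw [← headI_cons_tail (pm_ne_nil hn b)]
      rw [hb'.2]
    by_contra hne
    have hWab : preferMax k n a = preferMax k n b := by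
      rw [hWa, hWb]
      exact congrArg (· :: x) hab
    rcases lt_trichotomy a b with h | h | h
    · exact hdist a b h (by have := Finset.mem_range.1 hb'.1; omega) hWab
    · exact hne h
    · exact hdist b a h (by have := Finset.mem_range.1 ha'.1; omega) hWab.symm
  have himg : Jt.image (fun j => (preferMax k n j).headI) ⊆ Finset.range k := by
    intro ρ hρ
    obtain ⟨j, hj, hjρ⟩ := Finset.mem_image.1 hρ
    rw [← hjρ]
    exact Finset.mem_range.2 (pm_lt hk j _ (headI_mem (pm_ne_nil hn j)))
  have hle : Jt.card ≤ k := by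
    calc Jt.card = (Jt.image (fun j => (preferMax k n j).headI)).card :=
          (Finset.card_image_of_injOn hinj).symm
      _ ≤ (Finset.range k).card := Finset.card_le_card himg
      _ = k := Finset.card_range k
  omega

lemma pm_inj (hk : 1 < k) (hn : 1 ≤ n)
    (hmin : ∀ j < i₀, (k - 1) ∈ preferMax k n j)
    {a b : ℕ} (hab : a < b) (hb : b ≤ i₀) :
    preferMax k n a ≠ preferMax k n b := by
  intro h
  obtain ⟨b', rfl⟩ : ∃ b', b = b' + 1 := ⟨b - 1, by omega⟩
  exact fresh hk hn hmin b' (by omega) (mem_aux.2 ⟨a, by omega, h⟩)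

lemma upset (hk : 1 < k) {x : List ℕ} {τ σ : ℕ} (hτσ : τ < σ) (hσ : σ ≤ k - 1)
    (h : Cov k n i₀ (x ++ [τ])) : Cov k n i₀ (x ++ [σ]) := by
  obtain ⟨j, hj, hW⟩ := h
  cases j with
  | zero =>
    rw [pm_zero] at hW
    have := (concat_inj hW).2
    omega
  | succ j =>
    rw [pm_succ] at hW
    obtain ⟨hx, hτ'⟩ := concat_inj hW
    have hng := Nat.findGreatest_is_greatest
      (P := fun τ => ((preferMax k n j).tail ++ [τ]) ∉ preferMaxAux k n j)
      (by omega) hσ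
    rw [not_not] at hng
    rw [hx] at hng
    exact cov_of_mem_aux (by omega) hng

lemma forced_head (hn : 1 ≤ n)
    (hmin : ∀ j < i₀, (k - 1) ∈ preferMax k n j)
    {j : ℕ} (hj : j < i₀) {y : List ℕ}
    (hy : (k - 1) ∉ y) (ht : (preferMax k n j).tail = y) :
    preferMax k n j = (k - 1) :: y := by
  have hne := pm_ne_nil (k := k) hn j
  have hkm := hmin j hj
  rw [← headI_cons_tail hne, ht] at hkm
  rw [← headI_cons_tail hne, ht]
  rcases List.mem_cons.1 hkm with h | h
  · rw [← h]
  · exact absurd h hy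

lemma no_out0 (hk : 1 < k) (hn : 1 ≤ n)
    (hi₀ : (k - 1) ∉ preferMax k n i₀)
    (hmin : ∀ j < i₀, (k - 1) ∈ preferMax k n j)
    {x : List ℕ} (hx : (k - 1) ∈ x) {c : ℕ} (hc : c < k)
    (hcx : ¬ Cov k n i₀ (c :: x)) : ¬ Cov k n i₀ (x ++ [0]) := by
  intro h0
  have hallout : ∀ σ, σ < k → Cov k n i₀ (x ++ [σ]) := by
    intro σ hσ
    rcases Nat.eq_zero_or_pos σ with rfl | hpos
    · exact h0
    · exact upset hk hpos (by omega) h0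
  set Jt := (Finset.range i₀).filter (fun j => (preferMax k n j).tail = x) with hJt
  set Ji := (Finset.range i₀).filter (fun j => (preferMax k n j).dropLast = x) with hJi
  have hJiCard : k ≤ Ji.card := by
    have hsub : Finset.range k ⊆ Ji.image (fun j => (preferMax k n j).getLastD 0) := by
      intro σ hσ
      obtain ⟨l, hl, hWl⟩ := hallout σ (Finset.mem_range.1 hσ)
      refine Finset.mem_image.2 ⟨l, ?_, ?_⟩
      · refine Finset.mem_filter.2 ⟨Finset.mem_range.2 hl, ?_⟩
        rw [hWl]
        exact List.dropLast_concat
      · rw [hWl]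
        exact List.getLastD_concat
    calc k = (Finset.range k).card := (Finset.card_range k).symm
      _ ≤ (Ji.image (fun j => (preferMax k n j).getLastD 0)).card := Finset.card_le_card hsub
      _ ≤ Ji.card := Finset.card_image_le
  have hstar := star k n x i₀
  rw [← hJt, ← hJi] at hstar
  have hind0 : ¬ ((preferMax k n 0).dropLast = x) := by
    rw [dropLast_pm0]
    intro h
    rw [← h] at hx
    have := List.eq_of_mem_replicate hx
    omega
  have hindN : ¬ ((preferMax k n i₀).dropLast = x) := by
    intro h
    apply hi₀
    apply List.dropLast_subset _
    rw [h]
    exact hx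
  rw [if_neg hind0, if_neg hindN] at hstar
  have hJtCard : k ≤ Jt.card := by omega
  have hinj : Set.InjOn (fun j => (preferMax k n j).headI) Jt := by
    intro a ha b hb hab
    have ha' := Finset.mem_filter.1 ha
    have hb' := Finset.mem_filter.1 hb
    have hWa : preferMax k n a = (preferMax k n a).headI :: x := by
      conv_lhs => rw [← headI_cons_tail (pm_ne_nil hn a)]
      rw [ha'.2]
    have hWb : preferMax k n b = (preferMax k n b).headI :: x := by
      conv_lhs => rw [← headI_cons_tail (pm_ne_nil hn b)]
      rw [hb'.2]
    by_contra hne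
    have hWab : preferMax k n a = preferMax k n b := by
      rw [hWa, hWb]
      exact congrArg (· :: x) hab
    rcases lt_trichotomy a b with h | h | h
    · exact pm_inj hk hn hmin h (by have := Finset.mem_range.1 hb'.1; omega) hWab
    · exact hne h
    · exact pm_inj hk hn hmin h (by have := Finset.mem_range.1 ha'.1; omega) hWab.symm
  have himg : Jt.image (fun j => (preferMax k n j).headI) ⊆ (Finset.range k).erase c := by
    intro ρ hρ
    obtain ⟨j, hj, hjρ⟩ := Finset.mem_image.1 hρ
    have hj' := Finset.mem_filter.1 hj
    refine Finset.mem_erase.2 ⟨?_, ?_⟩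
    · intro hρc
      apply hcx
      refine ⟨j, Finset.mem_range.1 hj'.1, ?_⟩
      rw [← headI_cons_tail (pm_ne_nil hn j), hj'.2, hjρ, hρc]
    · rw [← hjρ]
      exact Finset.mem_range.2 (pm_lt hk j _ (headI_mem (pm_ne_nil hn j)))
  have hle : Jt.card ≤ k - 1 := by
    calc Jt.card = (Jt.image (fun j => (preferMax k n j).headI)).card :=
          (Finset.card_image_of_injOn hinj).symm
      _ ≤ ((Finset.range k).erase c).card := Finset.card_le_card himg
      _ = k - 1 := by rw [Finset.card_erase_of_mem (Finset.mem_range.2 hc), Finset.card_range]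
  omega

lemma zstar (hk : 1 < k) (hn : 1 ≤ n)
    (hi₀ : (k - 1) ∉ preferMax k n i₀)
    (hmin : ∀ j < i₀, (k - 1) ∈ preferMax k n j)
    (hone : 1 ≤ i₀) :
    (preferMax k n i₀).dropLast = List.replicate (n - 1) 0 := by
  obtain ⟨m, rfl⟩ : ∃ m, i₀ = m + 1 := ⟨i₀ - 1, by omega⟩
  set z := (preferMax k n (m + 1)).dropLast with hz
  have hzfree : (k - 1) ∉ z := fun h => hi₀ (List.dropLast_subset _ h)
  have hzz : z = (preferMax k n m).tail := by
    rw [hz, tail_eq_dropLast_succ]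
  -- Cov (z ++ [k-1])
  have hcov : ∃ l, l < m + 1 ∧ preferMax k n l = z ++ [k - 1] := by
    by_cases hmem : z ++ [k - 1] ∈ preferMaxAux k n m
    · obtain ⟨l, hl, h⟩ := mem_aux.1 hmem
      exact ⟨l, by omega, h⟩
    · exfalso
      rw [hzz] at hmem
      have hge := Nat.le_findGreatest
        (P := fun τ => ((preferMax k n m).tail ++ [τ]) ∉ preferMaxAux k n m)
        (le_refl (k - 1)) hmem
      have hle := Nat.findGreatest_le
        (P := fun τ => ((preferMax k n m).tail ++ [τ]) ∉ preferMaxAux k n m) (k - 1)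
      have hfg : Nat.findGreatest
          (fun τ => ((preferMax k n m).tail ++ [τ]) ∉ preferMaxAux k n m) (k - 1) = k - 1 := by
        omega
      apply hi₀
      rw [pm_succ, hfg]
      simp
  set Jt := (Finset.range (m + 1)).filter (fun j => (preferMax k n j).tail = z) with hJt
  set Ji := (Finset.range (m + 1)).filter (fun j => (preferMax k n j).dropLast = z) with hJi
  have hJt1 : Jt.card ≤ 1 := by
    refine Finset.card_le_one.2 ?_
    intro a ha b hb
    have ha' := Finset.mem_filter.1 ha
    have hb' := Finset.mem_filter.1 hb
    have hWa := forced_head hn hmin (Finset.mem_range.1 ha'.1) hzfree ha'.2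
    have hWb := forced_head hn hmin (Finset.mem_range.1 hb'.1) hzfree hb'.2
    by_contra hne
    rcases lt_trichotomy a b with h | h | h
    · exact pm_inj hk hn hmin h (by have := Finset.mem_range.1 hb'.1; omega)
        (hWa.trans hWb.symm)
    · exact hne h
    · exact pm_inj hk hn hmin h (by have := Finset.mem_range.1 ha'.1; omega)
        (hWb.trans hWa.symm)
  have hJi1 : 1 ≤ Ji.card := by
    obtain ⟨l, hl, hWl⟩ := hcov
    refine Finset.card_pos.2 ⟨l, Finset.mem_filter.2 ⟨Finset.mem_range.2 hl, ?_⟩⟩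
    rw [hWl]
    exact List.dropLast_concat
  have hstar := star k n z (m + 1)
  rw [← hJt, ← hJi, if_pos hz.symm] at hstar
  by_cases h0 : (preferMax k n 0).dropLast = z
  · rw [dropLast_pm0] at h0
    exact h0.symm
  · rw [if_neg h0] at hstar
    omega

lemma out_to_in (hk : 1 < k) (hn : 1 ≤ n)
    (hi₀ : (k - 1) ∉ preferMax k n i₀)
    (hmin : ∀ j < i₀, (k - 1) ∈ preferMax k n j)
    {y : List ℕ} (hy : (k - 1) ∉ y)
    (h : Cov k n i₀ (y ++ [k - 1])) : Cov k n i₀ ((k - 1) :: y) := by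
  have hone : 1 ≤ i₀ := by
    obtain ⟨j, hj, _⟩ := h
    omega
  have hstar := star k n y i₀
  have hind : (if (preferMax k n 0).dropLast = y then 1 else 0)
      = (if (preferMax k n i₀).dropLast = y then 1 else 0) := by
    rw [dropLast_pm0, zstar hk hn hi₀ hmin hone]
  rw [hind] at hstar
  have hJi1 : 1 ≤ ((Finset.range i₀).filter
      (fun j => (preferMax k n j).dropLast = y)).card := by
    obtain ⟨j, hj, hWj⟩ := h
    refine Finset.card_pos.2 ⟨j, Finset.mem_filter.2 ⟨Finset.mem_range.2 hj, ?_⟩⟩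
    rw [hWj]
    exact List.dropLast_concat
  have hJt1 : 1 ≤ ((Finset.range i₀).filter
      (fun j => (preferMax k n j).tail = y)).card := by omega
  obtain ⟨j, hj⟩ := Finset.card_pos.1 hJt1
  have hj' := Finset.mem_filter.1 hj
  exact ⟨j, Finset.mem_range.1 hj'.1,
    forced_head hn hmin (Finset.mem_range.1 hj'.1) hy hj'.2⟩

lemma Zlem (hk : 1 < k) (hn2 : 2 ≤ n)
    (hi₀ : (k - 1) ∉ preferMax k n i₀)
    (hmin : ∀ j < i₀, (k - 1) ∈ preferMax k n j)
    (hone : 1 ≤ i₀) :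
    ∀ t, t ≤ n - 2 → ∀ u : List ℕ, u.length = t → (∀ c ∈ u, c < k) → (k - 1) ∉ u →
      ¬ Cov k n i₀ ((u ++ (k - 1) :: List.replicate (n - 2 - t) 0) ++ [0]) → False := by
  have hn : 1 ≤ n := by omega
  intro t
  induction t with
  | zero =>
    intro _ u hu _ _ hnc
    have hu0 : u = [] := List.length_eq_zero_iff.1 hu
    subst hu0
    apply hnc
    have hx : (([] : List ℕ) ++ (k - 1) :: List.replicate (n - 2 - 0) 0) ++ [0]
        = (k - 1) :: List.replicate (n - 1) 0 := by
      have harith : n - 1 = (n - 2 - 0) + 1 := by omega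
      rw [harith, List.replicate_succ']
      simp
    rw [hx]
    apply out_to_in hk hn hi₀ hmin
    · intro h
      have := List.eq_of_mem_replicate h
      omega
    · exact ⟨0, hone, pm_zero k n⟩
  | succ t IH =>
    intro ht u hu hult hufree hnc
    obtain ⟨c, u', rfl⟩ := List.exists_cons_of_ne_nil
      (show u ≠ [] by intro h; rw [h] at hu; simp at hu)
    set y := u' ++ (k - 1) :: List.replicate (n - 2 - t) 0 with hy
    have hshape : ((c :: u' ++ (k - 1) :: List.replicate (n - 2 - (t + 1)) 0) ++ [0])
        = c :: y := by
      have harith : n - 2 - t = (n - 2 - (t + 1)) + 1 := by omega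
      rw [hy, harith, List.replicate_succ']
      simp
    rw [hshape] at hnc
    have hky : (k - 1) ∈ y := by
      rw [hy]
      exact List.mem_append_right _ (List.mem_cons_self)
    have hc : c < k := hult c (List.mem_cons_self)
    have h2 : ¬ Cov k n i₀ (y ++ [0]) := no_out0 hk hn hi₀ hmin hky hc hnc
    exact IH (by omega) u' (by simpa using hu)
      (fun d hd => hult d (List.mem_cons_of_mem _ hd))
      (fun hd => hufree (List.mem_cons_of_mem _ hd)) h2

lemma Bfull (hk : 1 < k) (hn2 : 2 ≤ n)
    (hi₀ : (k - 1) ∉ preferMax k n i₀)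
    (hmin : ∀ j < i₀, (k - 1) ∈ preferMax k n j)
    (hone : 1 ≤ i₀) {y : List ℕ} (hlen : y.length = n - 1)
    (hylt : ∀ c ∈ y, c < k) (hyfree : (k - 1) ∉ y)
    (hnc : ¬ Cov k n i₀ (y ++ [k - 1])) : False := by
  have hn : 1 ≤ n := by omega
  obtain ⟨c, u, rfl⟩ := List.exists_cons_of_ne_nil
    (show y ≠ [] by intro h; rw [h] at hlen; simp at hlen; omega)
  set y₂ := u ++ [k - 1] with hy₂
  have hshape : (c :: u) ++ [k - 1] = c :: y₂ := by simp [hy₂]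
  rw [hshape] at hnc
  have hky : (k - 1) ∈ y₂ := by simp [hy₂]
  have hc : c < k := hylt c (List.mem_cons_self)
  have h2 : ¬ Cov k n i₀ (y₂ ++ [0]) := no_out0 hk hn hi₀ hmin hky hc hnc
  apply Zlem hk hn2 hi₀ hmin hone (n - 2) le_rfl u
  · have : (c :: u).length = n - 1 := hlen
    simp at this
    omega
  · exact fun d hd => hylt d (List.mem_cons_of_mem _ hd)
  · exact fun hd => hyfree (List.mem_cons_of_mem _ hd)
  · have hrep : n - 2 - (n - 2) = 0 := by omega
    rw [hrep]
    simpa [hy₂] using h2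

lemma Aprime (hk : 1 < k) (hn2 : 2 ≤ n)
    (hi₀ : (k - 1) ∉ preferMax k n i₀)
    (hmin : ∀ j < i₀, (k - 1) ∈ preferMax k n j)
    (hone : 1 ≤ i₀) :
    ∀ t (v s : List ℕ), v.length = t → (∀ c ∈ v, c < k) → (∀ c ∈ s, c < k) →
      (k - 1) ∉ s → (v ++ (k - 1) :: s).length = n - 1 →
      ¬ Cov k n i₀ ((v ++ (k - 1) :: s) ++ [0]) → False := by
  have hn : 1 ≤ n := by omega
  intro t
  induction t with
  | zero =>
    intro v s hv _ hslt hsfree hlen hnc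
    have hv0 : v = [] := List.length_eq_zero_iff.1 hv
    subst hv0
    have hshape : (([] : List ℕ) ++ (k - 1) :: s) ++ [0] = (k - 1) :: (s ++ [0]) := by
      simp
    rw [hshape] at hnc
    have hfree : (k - 1) ∉ s ++ [0] := by
      intro h
      rcases List.mem_append.1 h with h | h
      · exact hsfree h
      · have : k - 1 = 0 := by simpa using h
        omega
    have hnc2 : ¬ Cov k n i₀ ((s ++ [0]) ++ [k - 1]) := by
      intro hcov
      exact hnc (out_to_in hk hn hi₀ hmin hfree hcov)
    apply Bfull hk hn2 hi₀ hmin hone (y := s ++ [0]) ?_ ?_ hfree hnc2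
    · simp at hlen ⊢
      omega
    · intro d hd
      rcases List.mem_append.1 hd with h | h
      · exact hslt d h
      · have : d = 0 := by simpa using h
        omega
  | succ t IH =>
    intro v s hv hvlt hslt hsfree hlen hnc
    obtain ⟨c, v', rfl⟩ := List.exists_cons_of_ne_nil
      (show v ≠ [] by intro h; rw [h] at hv; simp at hv)
    set y := v' ++ (k - 1) :: (s ++ [0]) with hy
    have hshape : ((c :: v' ++ (k - 1) :: s) ++ [0]) = c :: y := by
      simp [hy]
    rw [hshape] at hnc
    have hky : (k - 1) ∈ y := by
      rw [hy]
      exact List.mem_append_right _ (List.mem_cons_self)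
    have hc : c < k := hvlt c (List.mem_cons_self)
    have h2 : ¬ Cov k n i₀ (y ++ [0]) := no_out0 hk hn hi₀ hmin hky hc hnc
    apply IH v' (s ++ [0]) (by simpa using hv)
      (fun d hd => hvlt d (List.mem_cons_of_mem _ hd)) ?_ ?_ ?_ ?_
    · intro d hd
      rcases List.mem_append.1 hd with h | h
      · exact hslt d h
      · have : d = 0 := by simpa using h
        omega
    · intro h
      rcases List.mem_append.1 h with h | h
      · exact hsfree h
      · have : k - 1 = 0 := by simpa using h
        omega
    · have h1 : ((c :: v') ++ (k - 1) :: s).length = n - 1 := hlen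
      simp at h1 ⊢
      omega
    · simpa [hy] using h2

lemma exists_last_split {a : ℕ} : ∀ {l : List ℕ}, a ∈ l → ∃ v s, l = v ++ a :: s ∧ a ∉ s := by
  intro l
  induction l with
  | nil => simp
  | cons b l ih =>
    intro h
    by_cases hal : a ∈ l
    · obtain ⟨v, s, rfl, hs⟩ := ih hal
      exact ⟨b :: v, s, rfl, hs⟩
    · have hab : a = b := by
        rcases List.mem_cons.1 h with h | h
        · exact h
        · exact absurd h hal
      exact ⟨[], l, by simp [hab], hal⟩

end PMproof

/-- Let `i₀ = min { i : the symbol k-1 does not occur in wᵢ }` for the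
`(k,n)`-prefer-max cycle with `k > 1`, `n ≥ 1`.  Then every word `w ∈ [k]^n`
containing the symbol `k-1` appears among the windows before index `i₀`. -/
theorem preferMax_layer_before (k n i₀ : ℕ) (hk : 1 < k) (hn : 1 ≤ n)
    (hi₀ : (k - 1) ∉ preferMax k n i₀)
    (hmin : ∀ j < i₀, (k - 1) ∈ preferMax k n j)
    (w : List ℕ) (hwlen : w.length = n) (hwk : ∀ σ ∈ w, σ < k) (hwmem : (k - 1) ∈ w) :
    ∃ j < i₀, preferMax k n j = w := by
  classical
  have hone : 1 ≤ i₀ := by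
    rcases Nat.eq_zero_or_pos i₀ with h | h
    · exfalso
      apply hi₀
      rw [h, PMproof.pm_zero]
      simp
    · exact h
  rcases Nat.lt_or_ge n 2 with hn1 | hn2
  · -- n = 1
    have hn1' : n = 1 := by omega
    subst hn1'
    obtain ⟨a, rfl⟩ := List.length_eq_one_iff.1 hwlen
    have ha : a = k - 1 := by
      have h := hwmem
      simp at h
      omega
    subst ha
    exact ⟨0, hone, by simp [PMproof.pm_zero]⟩
  · by_contra hM
    push_neg at hM
    have hnc : ¬ PMproof.Cov k n i₀ w := by
      rintro ⟨j, hj, he⟩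
      exact hM j hj he
    have hwne : w ≠ [] := by
      intro h
      rw [h] at hwlen
      simp at hwlen
      omega
    set x := w.dropLast with hx
    set c := w.getLast hwne with hc
    have hw : x ++ [c] = w := List.dropLast_append_getLast hwne
    have hxlen : x.length = n - 1 := by
      rw [hx, List.length_dropLast, hwlen]
    have hxlt : ∀ d ∈ x, d < k := fun d hd => hwk d (List.dropLast_subset _ hd)
    have hck : c < k := hwk c (List.getLast_mem hwne)
    by_cases hxk : (k - 1) ∈ x
    · have h0 : ¬ PMproof.Cov k n i₀ (x ++ [0]) := by
        intro h0c
        apply hnc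
        rcases Nat.eq_zero_or_pos c with hc0 | hcpos
        · rw [hc0] at hw
          rwa [hw] at h0c
        · have := PMproof.upset hk (τ := 0) (σ := c) hcpos (by omega) h0c
          rwa [hw] at this
      obtain ⟨v, s, hxe, hsfree⟩ := PMproof.exists_last_split hxk
      refine absurd trivial (fun _ => ?_)
      apply PMproof.Aprime hk hn2 hi₀ hmin hone v.length v s rfl ?_ ?_ hsfree ?_ ?_
      · exact fun d hd => hxlt d (by rw [hxe]; exact List.mem_append_left _ hd)
      · exact fun d hd => hxlt d (by rw [hxe]; exact List.mem_append_right _ (List.mem_cons_of_mem _ hd))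
      · rw [← hxe, hxlen]
      · rw [← hxe]
        exact h0
    · have hck1 : c = k - 1 := by
        have h := hwmem
        rw [← hw] at h
        rcases List.mem_append.1 h with h | h
        · exact absurd h hxk
        · have : k - 1 = c := by simpa using h
          omega
      refine absurd trivial (fun _ => ?_)
      apply PMproof.Bfull hk hn2 hi₀ hmin hone hxlen hxlt hxk
      rw [hck1] at hw
      rw [hw]
      exact hnc
end

section
/- For every k ≥ 1 and n ≥ 1, the (k,n)-prefer-max cycle (w_i)_{i=0}^{k^n-1} is a De Bruijn sequence of order n over [k]: the construction is well defined (at each step a symbol τ with the required property exists), the words w_0,...,w_{k^n-1} are pairwise distinct, and every word of [k]^n occurs among them. -/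
namespace PM

variable (k n : ℕ)

lemma pm_zero : preferMax k n 0 = List.replicate (n - 1) 0 ++ [k - 1] := rfl

lemma aux_succ (i : ℕ) : preferMaxAux k n (i + 1) =
    ((preferMax k n i).tail ++
      [Nat.findGreatest (fun τ => ((preferMax k n i).tail ++ [τ]) ∉ preferMaxAux k n i) (k - 1)])
      :: preferMaxAux k n i := rfl

lemma pm_succ (i : ℕ) : preferMax k n (i + 1) =
    (preferMax k n i).tail ++
      [Nat.findGreatest (fun τ => ((preferMax k n i).tail ++ [τ]) ∉ preferMaxAux k n i) (k - 1)] := by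
  show (preferMaxAux k n (i+1)).headI = _
  rw [aux_succ]
  rfl

lemma mem_aux_iff (i : ℕ) (z : List ℕ) :
    z ∈ preferMaxAux k n i ↔ ∃ j ≤ i, preferMax k n j = z := by
  induction i with
  | zero =>
    simp only [preferMaxAux, List.mem_singleton]
    constructor
    · rintro rfl; exact ⟨0, le_refl _, rfl⟩
    · rintro ⟨j, hj, rfl⟩; interval_cases j; rfl
  | succ i ih =>
    rw [aux_succ, List.mem_cons, ih, ← pm_succ]
    constructor
    · rintro (h | ⟨j, hj, h⟩)
      · exact ⟨i + 1, le_refl _, h.symm⟩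
      · exact ⟨j, by omega, h⟩
    · rintro ⟨j, hj, h⟩
      rcases Nat.eq_or_lt_of_le hj with rfl | hj'
      · exact Or.inl h.symm
      · exact Or.inr ⟨j, by omega, h⟩

lemma mem_aux_of_le {j i : ℕ} (h : j ≤ i) : preferMax k n j ∈ preferMaxAux k n i :=
  (mem_aux_iff k n i _).2 ⟨j, h, rfl⟩

lemma mem_aux_mono {z : List ℕ} {j i : ℕ} (h : j ≤ i) (hz : z ∈ preferMaxAux k n j) :
    z ∈ preferMaxAux k n i := by
  rw [mem_aux_iff] at hz ⊢
  obtain ⟨m, hm, hw⟩ := hz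
  exact ⟨m, le_trans hm h, hw⟩

lemma length_pm (hn : 1 ≤ n) (hk : 1 ≤ k) : ∀ i, (preferMax k n i).length = n := by
  intro i
  induction i with
  | zero => simp [pm_zero]; omega
  | succ i ih => rw [pm_succ]; simp [ih]; omega

lemma tail_length (hn : 1 ≤ n) (hk : 1 ≤ k) (i : ℕ) : (preferMax k n i).tail.length = n - 1 := by
  simp [length_pm k n hn hk i]

lemma mem_lt (hk : 1 ≤ k) : ∀ i, ∀ a ∈ preferMax k n i, a < k := by
  intro i
  induction i with
  | zero =>
    intro a ha
    rw [pm_zero] at ha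
    rcases List.mem_append.1 ha with h | h
    · rw [List.eq_of_mem_replicate h]; omega
    · simp at h; omega
  | succ i ih =>
    intro a ha
    rw [pm_succ] at ha
    rcases List.mem_append.1 ha with h | h
    · exact ih a (List.mem_of_mem_tail h)
    · simp at h; subst h
      have := Nat.findGreatest_le (P := fun τ => ((preferMax k n i).tail ++ [τ]) ∉ preferMaxAux k n i) (k - 1)
      omega

lemma take_pm_succ (hn : 1 ≤ n) (hk : 1 ≤ k) (i : ℕ) :
    (preferMax k n (i + 1)).take (n - 1) = (preferMax k n i).drop 1 := by
  rw [pm_succ, List.take_left' (by simpa using tail_length k n hn hk i), ← List.drop_one]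

/-- upper-set property -/
lemma upper {i : ℕ} {y : List ℕ} {τ τ' : ℕ} (hmem : y ++ [τ] ∈ preferMaxAux k n i)
    (h1 : τ < τ') (h2 : τ' ≤ k - 1) : y ++ [τ'] ∈ preferMaxAux k n i := by
  rw [mem_aux_iff] at hmem
  obtain ⟨j, hj, hw⟩ := hmem
  match j with
  | 0 =>
    rw [pm_zero] at hw
    have := List.append_inj' hw rfl
    obtain ⟨h3, h4⟩ := this
    simp at h4
    omega
  | j + 1 =>
    rw [pm_succ] at hw
    have := List.append_inj' hw rfl
    obtain ⟨h3, h4⟩ := this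
    simp at h4
    have hng := Nat.findGreatest_is_greatest (P := fun τ => ((preferMax k n j).tail ++ [τ]) ∉ preferMaxAux k n j) (by omega : Nat.findGreatest _ (k-1) < τ') h2
    simp only [not_not] at hng
    rw [h3] at hng
    exact mem_aux_mono k n (by omega) hng


def Fresh (k n i : ℕ) : Prop :=
  ∃ τ ≤ k - 1, (preferMax k n i).tail ++ [τ] ∉ preferMaxAux k n i

instance (k n i : ℕ) : Decidable (Fresh k n i) :=
  decidable_of_iff (∃ τ ≤ k - 1, (preferMax k n i).tail ++ [τ] ∉ preferMaxAux k n i) Iff.rfl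

lemma fresh_step {i : ℕ} (h : Fresh k n i) :
    preferMax k n (i + 1) ∉ preferMaxAux k n i := by
  obtain ⟨τ, hτ, hp⟩ := h
  rw [pm_succ]
  exact Nat.findGreatest_spec
    (P := fun τ => (preferMax k n i).tail ++ [τ] ∉ preferMaxAux k n i) hτ hp

lemma distinct {i : ℕ} (hfr : ∀ j < i, Fresh k n j) :
    ∀ a ≤ i, ∀ b ≤ i, preferMax k n a = preferMax k n b → a = b := by
  have key : ∀ a b, a < b → b ≤ i → preferMax k n a ≠ preferMax k n b := by
    intro a b hab hbi
    match b with
    | b + 1 =>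
      intro he
      have h1 : preferMax k n (b + 1) ∉ preferMaxAux k n b := fresh_step k n (hfr b (by omega))
      have h2 : preferMax k n a ∈ preferMaxAux k n b := mem_aux_of_le k n (by omega)
      rw [he] at h2
      exact h1 h2
  intro a ha b hb he
  rcases lt_trichotomy a b with h | h | h
  · exact absurd he (key a b h hb)
  · exact h
  · exact absurd he.symm (key b a h ha)

/-- The flow identity. -/
lemma flow (hn : 1 ≤ n) (hk : 1 ≤ k) (i : ℕ) (y : List ℕ) :
    ((Finset.range (i + 1)).filter (fun j => (preferMax k n j).take (n - 1) = y)).card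
      + (if (preferMax k n i).drop 1 = y then 1 else 0)
    = ((Finset.range (i + 1)).filter (fun j => (preferMax k n j).drop 1 = y)).card
      + (if (preferMax k n 0).take (n - 1) = y then 1 else 0) := by
  induction i with
  | zero =>
    simp only [Nat.zero_add, Finset.range_one, Finset.filter_singleton, List.drop_one]
    by_cases h1 : (preferMax k n 0).take (n - 1) = y <;>
      by_cases h2 : (preferMax k n 0).tail = y <;>
      simp [h1, h2]
  | succ i ih =>
    rw [Finset.range_add_one, Finset.filter_insert, Finset.filter_insert]
    have hshift : (preferMax k n (i + 1)).take (n - 1) = (preferMax k n i).drop 1 :=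
      take_pm_succ k n hn hk i
    have hmemA : i + 1 ∉ (Finset.range (i + 1)).filter
        (fun j => (preferMax k n j).take (n - 1) = y) := by simp
    have hmemB : i + 1 ∉ (Finset.range (i + 1)).filter
        (fun j => (preferMax k n j).drop 1 = y) := by simp
    rw [hshift]
    by_cases hd : (preferMax k n i).drop 1 = y
    · by_cases h2 : (preferMax k n (i + 1)).drop 1 = y
      · rw [if_pos hd, if_pos h2, if_pos h2, Finset.card_insert_of_notMem hmemA,
          Finset.card_insert_of_notMem hmemB]
        rw [if_pos hd] at ih
        omega
      · rw [if_pos hd, if_neg h2, if_neg h2, Finset.card_insert_of_notMem hmemA]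
        rw [if_pos hd] at ih
        omega
    · by_cases h2 : (preferMax k n (i + 1)).drop 1 = y
      · rw [if_neg hd, if_pos h2, if_pos h2, Finset.card_insert_of_notMem hmemB]
        rw [if_neg hd] at ih
        omega
      · rw [if_neg hd, if_neg h2, if_neg h2]
        rw [if_neg hd] at ih
        omega


lemma getD_cons_decomp {l : List ℕ} (h : l ≠ []) : l = l.getD 0 0 :: l.drop 1 := by
  cases l with
  | nil => exact absurd rfl h
  | cons a t => simp

/-- bound on the number of windows with a given (n-1)-suffix, avoiding head σ -/
lemma cardB_le_erase (hn : 1 ≤ n) (hk : 1 ≤ k) {i : ℕ} (hfr : ∀ j < i, Fresh k n j)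
    (y : List ℕ) {σ : ℕ} (hσ : σ < k) (hno : σ :: y ∉ preferMaxAux k n i) :
    ((Finset.range (i + 1)).filter (fun j => (preferMax k n j).drop 1 = y)).card ≤ k - 1 := by
  have h := Finset.card_le_card_of_injOn (fun j => (preferMax k n j).getD 0 0)
    (s := (Finset.range (i + 1)).filter (fun j => (preferMax k n j).drop 1 = y))
    (t := (Finset.range k).erase σ) ?_ ?_
  · rwa [Finset.card_erase_of_mem (Finset.mem_range.2 hσ), Finset.card_range] at h
  · intro j hj
    rw [Finset.mem_coe, Finset.mem_filter, Finset.mem_range] at hj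
    have hne : preferMax k n j ≠ [] := by
      have := length_pm k n hn hk j; intro hc; rw [hc] at this; simp at this; omega
    have hdec := getD_cons_decomp hne
    rw [hj.2] at hdec
    rw [Finset.mem_coe, Finset.mem_erase, Finset.mem_range]
    constructor
    · intro hc
      have hc' : (preferMax k n j).getD 0 0 = σ := hc
      rw [hc'] at hdec
      exact hno (by rw [← hdec]; exact mem_aux_of_le k n (by omega))
    · exact mem_lt k n hk j _ (by rw [hdec]; exact List.mem_cons_self)
  · intro a ha b hb he
    simp only [Finset.coe_filter, Set.mem_setOf_eq, Finset.mem_range] at ha hb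
    have hda := getD_cons_decomp (l := preferMax k n a) (by
      have := length_pm k n hn hk a; intro hc; rw [hc] at this; simp at this; omega)
    have hdb := getD_cons_decomp (l := preferMax k n b) (by
      have := length_pm k n hn hk b; intro hc; rw [hc] at this; simp at this; omega)
    rw [ha.2] at hda; rw [hb.2] at hdb
    have he' : (preferMax k n a).getD 0 0 = (preferMax k n b).getD 0 0 := he
    have : preferMax k n a = preferMax k n b := by rw [hda, hdb, he']
    exact distinct k n hfr a (by omega) b (by omega) this

/-- same but bound k (no avoided head) -/
lemma cardB_le (hn : 1 ≤ n) (hk : 1 ≤ k) {i : ℕ} (hfr : ∀ j < i, Fresh k n j)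
    (y : List ℕ) :
    ((Finset.range (i + 1)).filter (fun j => (preferMax k n j).drop 1 = y)).card ≤ k := by
  have h := Finset.card_le_card_of_injOn (fun j => (preferMax k n j).getD 0 0)
    (s := (Finset.range (i + 1)).filter (fun j => (preferMax k n j).drop 1 = y))
    (t := Finset.range k) ?_ ?_
  · rwa [Finset.card_range] at h
  · intro j hj
    rw [Finset.mem_coe, Finset.mem_filter, Finset.mem_range] at hj
    have hne : preferMax k n j ≠ [] := by
      have := length_pm k n hn hk j; intro hc; rw [hc] at this; simp at this; omega
    have hdec := getD_cons_decomp hne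
    rw [Finset.mem_coe, Finset.mem_range]
    exact mem_lt k n hk j _ (by rw [hdec]; exact List.mem_cons_self)
  · intro a ha b hb he
    simp only [Finset.coe_filter, Set.mem_setOf_eq, Finset.mem_range] at ha hb
    have hda := getD_cons_decomp (l := preferMax k n a) (by
      have := length_pm k n hn hk a; intro hc; rw [hc] at this; simp at this; omega)
    have hdb := getD_cons_decomp (l := preferMax k n b) (by
      have := length_pm k n hn hk b; intro hc; rw [hc] at this; simp at this; omega)
    rw [ha.2] at hda; rw [hb.2] at hdb
    have he' : (preferMax k n a).getD 0 0 = (preferMax k n b).getD 0 0 := he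
    have : preferMax k n a = preferMax k n b := by rw [hda, hdb, he']
    exact distinct k n hfr a (by omega) b (by omega) this

/-- if all extensions of y occur, there are at least k windows with prefix y -/
lemma cardA_ge (hn : 1 ≤ n) (hk : 1 ≤ k) {i : ℕ} {y : List ℕ} (hy : y.length = n - 1)
    (hall : ∀ τ < k, y ++ [τ] ∈ preferMaxAux k n i) :
    k ≤ ((Finset.range (i + 1)).filter (fun j => (preferMax k n j).take (n - 1) = y)).card := by
  have H : ∀ τ : ℕ, ∃ j, j ≤ i ∧ preferMax k n j = y ++ [τ % k] := by
    intro τ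
    obtain ⟨j, hj, hw⟩ := (mem_aux_iff k n i _).1 (hall (τ % k) (Nat.mod_lt _ (by omega)))
    exact ⟨j, hj, hw⟩
  have h := Finset.card_le_card_of_injOn (fun τ => Nat.find (H τ))
    (s := Finset.range k)
    (t := (Finset.range (i + 1)).filter (fun j => (preferMax k n j).take (n - 1) = y)) ?_ ?_
  · rwa [Finset.card_range] at h
  · intro τ hτ
    show Nat.find (H τ) ∈ _
    obtain ⟨hj, hw⟩ := Nat.find_spec (H τ)
    rw [Finset.mem_coe, Finset.mem_filter, Finset.mem_range]
    refine ⟨by omega, ?_⟩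
    rw [hw, List.take_left' hy]
  · intro a ha b hb he
    simp only [Finset.coe_range, Set.mem_Iio] at ha hb
    have he' : Nat.find (H a) = Nat.find (H b) := he
    obtain ⟨hja, hwa⟩ := Nat.find_spec (H a)
    obtain ⟨hjb, hwb⟩ := Nat.find_spec (H b)
    rw [he', hwb] at hwa
    have := List.append_cancel_left hwa
    simp only [List.cons.injEq, and_true] at this
    rw [Nat.mod_eq_of_lt hb, Nat.mod_eq_of_lt ha] at this
    omega


lemma stuck_all (hk : 1 ≤ k) {i : ℕ} (hst : ¬ Fresh k n i) :
    ∀ τ < k, (preferMax k n i).drop 1 ++ [τ] ∈ preferMaxAux k n i := by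
  unfold Fresh at hst
  push_neg at hst
  intro τ hτ
  have := hst τ (by omega)
  rwa [List.drop_one]

lemma p0_take (hn : 1 ≤ n) : (preferMax k n 0).take (n - 1) = List.replicate (n - 1) 0 := by
  rw [pm_zero, List.take_left' (by simp)]

lemma drop_len (hn : 1 ≤ n) (hk : 1 ≤ k) (i : ℕ) :
    ((preferMax k n i).drop 1).length = n - 1 := by
  simp [length_pm k n hn hk i]

/-- the stuck suffix is the all-zero word -/
lemma lemma1 (hn : 1 ≤ n) (hk : 1 ≤ k) {i : ℕ} (hfr : ∀ j < i, Fresh k n j)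
    (hst : ¬ Fresh k n i) :
    (preferMax k n 0).take (n - 1) = (preferMax k n i).drop 1 := by
  have hA := cardA_ge k n hn hk (drop_len k n hn hk i) (stuck_all k n hk hst)
  have hB := cardB_le k n hn hk hfr ((preferMax k n i).drop 1)
  have hfl := flow k n hn hk i ((preferMax k n i).drop 1)
  by_contra hne
  rw [if_neg hne, if_pos rfl] at hfl
  omega

/-- shift lemma: a missing word forces a shifted missing word -/
lemma shift (hn : 1 ≤ n) (hk : 1 ≤ k) {i : ℕ} (hfr : ∀ j < i, Fresh k n j)
    (hst : ¬ Fresh k n i) {y : List ℕ} {σ : ℕ} (hy : y.length = n - 1) (hσ : σ < k)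
    (hno : σ :: y ∉ preferMaxAux k n i) : y ++ [0] ∉ preferMaxAux k n i := by
  intro hmem
  have hall : ∀ τ < k, y ++ [τ] ∈ preferMaxAux k n i := by
    intro τ hτ
    rcases Nat.eq_zero_or_pos τ with rfl | hpos
    · exact hmem
    · exact upper k n hmem hpos (by omega)
  have hA := cardA_ge k n hn hk hy hall
  have hB := cardB_le_erase k n hn hk hfr y hσ hno
  have hfl := flow k n hn hk i y
  have hp0 := lemma1 k n hn hk hfr hst
  by_cases hy0 : (preferMax k n 0).take (n - 1) = y
  · rw [if_pos hy0, if_pos (by rw [← hp0]; exact hy0)] at hfl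
    omega
  · rw [if_neg hy0, if_neg (by rw [← hp0]; exact hy0)] at hfl
    omega

lemma zero_mem (hn : 1 ≤ n) (hk : 1 ≤ k) {i : ℕ} (hfr : ∀ j < i, Fresh k n j)
    (hst : ¬ Fresh k n i) :
    List.replicate (n - 1) 0 ++ [0] ∈ preferMaxAux k n i := by
  have hx : (preferMax k n i).drop 1 = List.replicate (n - 1) 0 := by
    rw [← lemma1 k n hn hk hfr hst, p0_take k n hn]
  have := stuck_all k n hk hst 0 (by omega)
  rwa [hx] at this

/-- suffix helper -/
lemma suffix_of_cons {l : List ℕ} {a : ℕ} {t : List ℕ} (h : l <:+ a :: t)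
    (hlen : l.length ≤ t.length) : l <:+ t := by
  obtain ⟨p, hp⟩ := h
  cases p with
  | nil =>
    simp at hp
    subst hp
    simp at hlen
  | cons c p' =>
    simp only [List.cons_append, List.cons.injEq] at hp
    exact ⟨p', hp.2⟩

/-- every valid word occurs before the first stuck index -/
lemma all_mem (hn : 1 ≤ n) (hk : 1 ≤ k) {i : ℕ} (hfr : ∀ j < i, Fresh k n j)
    (hst : ¬ Fresh k n i) :
    ∀ u : List ℕ, u.length = n → (∀ a ∈ u, a < k) → u ∈ preferMaxAux k n i := by
  suffices haux : ∀ d (u : List ℕ), u.length = n → (∀ a ∈ u, a < k) →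
      List.replicate (n - d) 0 <:+ u → u ∈ preferMaxAux k n i by
    intro u h1 h2
    exact haux n u h1 h2 (by rw [Nat.sub_self]; exact List.nil_suffix)
  intro d
  induction d with
  | zero =>
    intro u h1 h2 hsuf
    rw [Nat.sub_zero] at hsuf
    have hu : List.replicate n 0 = u := hsuf.eq_of_length (by simp [h1])
    have hrep : List.replicate n 0 = List.replicate (n - 1) 0 ++ [0] := by
      rw [← List.replicate_succ']
      congr 1
      omega
    rw [← hu, hrep]
    exact zero_mem k n hn hk hfr hst
  | succ d ih =>
    intro u h1 h2 hsuf
    by_cases hd : n ≤ d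
    · exact ih u h1 h2 (by rw [show n - d = 0 by omega]; exact List.nil_suffix)
    · by_contra hno
      cases u with
      | nil => simp at h1; omega
      | cons σ y =>
        have hylen : y.length = n - 1 := by simp at h1; omega
        have hσ : σ < k := h2 σ (List.mem_cons_self)
        have hmiss := shift k n hn hk hfr hst hylen hσ hno
        apply hmiss
        apply ih (y ++ [0])
        · simp [hylen]; omega
        · intro a ha
          rcases List.mem_append.1 ha with h | h
          · exact h2 a (List.mem_cons_of_mem _ h)
          · simp at h; omega
        · -- replicate (n - d) 0 <:+ y ++ [0]
          have h5 : List.replicate (n - (d + 1)) 0 <:+ y := by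
            apply suffix_of_cons hsuf
            simp [hylen]; omega
          have h6 : n - d = (n - (d + 1)) + 1 := by omega
          rw [h6, List.replicate_succ']
          obtain ⟨p, hp⟩ := h5
          exact ⟨p, by rw [← List.append_assoc, hp]⟩


def enc (k n : ℕ) (hk : 0 < k) (l : List ℕ) : Fin n → Fin k :=
  fun a => ⟨l.getD a 0 % k, Nat.mod_lt _ hk⟩

lemma enc_inj (hk : 0 < k) {u v : List ℕ} (hu : u.length = n) (hv : v.length = n)
    (hu' : ∀ a ∈ u, a < k) (hv' : ∀ a ∈ v, a < k) (h : enc k n hk u = enc k n hk v) :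
    u = v := by
  apply List.ext_getElem (by omega)
  intro m h1 h2
  have := congrFun h ⟨m, by omega⟩
  simp only [enc, Fin.mk.injEq] at this
  rw [List.getD_eq_getElem u 0 h1, List.getD_eq_getElem v 0 h2] at this
  rwa [Nat.mod_eq_of_lt (hu' _ (List.getElem_mem h1)),
    Nat.mod_eq_of_lt (hv' _ (List.getElem_mem h2))] at this

lemma enc_surj (hk : 0 < k) (φ : Fin n → Fin k) :
    ∃ u : List ℕ, u.length = n ∧ (∀ a ∈ u, a < k) ∧ enc k n hk u = φ := by
  refine ⟨List.ofFn (fun a => (φ a : ℕ)), by simp, ?_, ?_⟩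
  · intro a ha
    rw [List.mem_ofFn] at ha
    obtain ⟨b, rfl⟩ := ha
    exact (φ b).isLt
  · funext a
    apply Fin.ext
    have hlt : (a : ℕ) < (List.ofFn (fun a => (φ a : ℕ))).length := by simp
    show (List.ofFn (fun a => (φ a : ℕ))).getD (a : ℕ) 0 % k = (φ a : ℕ)
    rw [List.getD_eq_getElem _ 0 hlt]
    simp [Nat.mod_eq_of_lt (φ _).isLt]

lemma card_univ_fun (hk : 0 < k) : Fintype.card (Fin n → Fin k) = k ^ n := by
  simp

/-- windows up to a fresh run are at most k^n many -/
lemma le_pow (hn : 1 ≤ n) (hk : 1 ≤ k) {i : ℕ} (hfr : ∀ j < i, Fresh k n j) :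
    i + 1 ≤ k ^ n := by
  classical
  have hinj : Set.InjOn (fun j => enc k n hk (preferMax k n j)) (Finset.range (i + 1)) := by
    intro a ha b hb he
    simp only [Finset.coe_range, Set.mem_Iio] at ha hb
    have he' : enc k n hk (preferMax k n a) = enc k n hk (preferMax k n b) := he
    have := enc_inj k n hk (length_pm k n hn hk a) (length_pm k n hn hk b)
      (mem_lt k n hk a) (mem_lt k n hk b) he'
    exact distinct k n hfr a (by omega) b (by omega) this
  have := Finset.card_image_of_injOn hinj
  have hsub := Finset.card_le_univ ((Finset.range (i + 1)).image
    (fun j => enc k n hk (preferMax k n j)))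
  rw [this, Finset.card_range] at hsub
  rwa [card_univ_fun k n hk] at hsub

/-- there is a stuck index -/
lemma exists_stuck (hn : 1 ≤ n) (hk : 1 ≤ k) : ∃ i, ¬ Fresh k n i := by
  by_contra h
  push_neg at h
  have := le_pow k n hn hk (i := k ^ n) (fun j _ => h j)
  have hp : 1 ≤ k ^ n := Nat.one_le_pow _ _ (by omega)
  omega

/-- the first stuck index is exactly k^n - 1 -/
lemma stuck_eq (hn : 1 ≤ n) (hk : 1 ≤ k) {i : ℕ} (hfr : ∀ j < i, Fresh k n j)
    (hst : ¬ Fresh k n i) : i + 1 = k ^ n := by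
  classical
  refine le_antisymm (le_pow k n hn hk hfr) ?_
  have hinj : Set.InjOn (fun j => enc k n hk (preferMax k n j)) (Finset.range (i + 1)) := by
    intro a ha b hb he
    simp only [Finset.coe_range, Set.mem_Iio] at ha hb
    have he' : enc k n hk (preferMax k n a) = enc k n hk (preferMax k n b) := he
    have := enc_inj k n hk (length_pm k n hn hk a) (length_pm k n hn hk b)
      (mem_lt k n hk a) (mem_lt k n hk b) he'
    exact distinct k n hfr a (by omega) b (by omega) this
  have hcard := Finset.card_image_of_injOn hinj
  rw [Finset.card_range] at hcard
  have hcover : (Finset.univ : Finset (Fin n → Fin k)) ⊆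
      (Finset.range (i + 1)).image (fun j => enc k n hk (preferMax k n j)) := by
    intro φ _
    obtain ⟨u, hu1, hu2, hu3⟩ := enc_surj k n hk φ
    have hmem := all_mem k n hn hk hfr hst u hu1 hu2
    obtain ⟨j, hj, hw⟩ := (mem_aux_iff k n i u).1 hmem
    rw [Finset.mem_image]
    exact ⟨j, Finset.mem_range.2 (by omega), by rw [hw, hu3]⟩
  have := Finset.card_le_card hcover
  rw [Finset.card_univ, card_univ_fun k n hk, hcard] at this
  exact this

end PM

/-- The `(k,n)`-prefer-max cycle (`k ≥ 1`, `n ≥ 1`) is a De Bruijn sequence of order `n`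
over `[k]`: at each step a symbol `τ ∈ [k]` with `xτ ∉ {w₀,…,wᵢ}` exists (so the
construction is well defined), the windows `w₀,…,w_{kⁿ-1}` are pairwise distinct, and
every word of `[k]^n` occurs among them. -/
theorem preferMax_isDeBruijn (k n : ℕ) (hk : 1 ≤ k) (hn : 1 ≤ n) :
    (∀ i, i + 1 < k ^ n →
      ∃ τ < k, ∀ j ≤ i, preferMax k n j ≠ (preferMax k n i).tail ++ [τ]) ∧
    (∀ i < k ^ n, ∀ j < k ^ n, preferMax k n i = preferMax k n j → i = j) ∧
    (∀ w : List ℕ, w.length = n → (∀ σ ∈ w, σ < k) → ∃ i < k ^ n, preferMax k n i = w) := by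
  classical
  obtain ⟨i₀, hst, hfr⟩ : ∃ i₀, ¬ PM.Fresh k n i₀ ∧ ∀ j < i₀, PM.Fresh k n j := by
    have h := PM.exists_stuck k n hn hk
    refine ⟨Nat.find h, Nat.find_spec h, fun j hj => ?_⟩
    exact not_not.1 (Nat.find_min h hj)
  have hN : i₀ + 1 = k ^ n := PM.stuck_eq k n hn hk hfr hst
  refine ⟨?_, ?_, ?_⟩
  · intro i hi
    have hfri : PM.Fresh k n i := hfr i (by omega)
    obtain ⟨τ, hτ, hp⟩ := hfri
    refine ⟨τ, by omega, fun j hj he => ?_⟩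
    exact hp ((PM.mem_aux_iff k n i _).2 ⟨j, hj, he⟩)
  · intro i hi j hj he
    exact PM.distinct k n hfr i (by omega) j (by omega) he
  · intro w hw1 hw2
    have := PM.all_mem k n hn hk hfr hst w hw1 hw2
    obtain ⟨j, hj, hwj⟩ := (PM.mem_aux_iff k n i₀ w).1 this
    exact ⟨j, by omega, hwj⟩
end
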